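/- arXiv:2210.10837 — 7 statements merged into one kernel-verified Lean document; each statement's English description precedes it below -/
import Mathlib

section
/- For every measurable predictor f : 𝒳 → [0,1], the group sufficiency gap satisfies Suf_f ≤ 4·E[|f(X) − B|], where B = E[Y | σ(X,A)] is the A-group Bayes predictor. (Theorem 1, first part.) -/
open MeasureTheory ProbabilityTheory
open scoped ENNReal

/-- **Theorem 1 (first part).** For every measurable predictor `f : 𝒳 → [0,1]`, the group
sufficiency gap satisfies `Suf_f ≤ 4 · E[|f(X) − B|]`, where `B = E[Y | σ(X,A)]` is the
`A`-group Bayes predictor. -/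
theorem suf_gap_le_four_mul_expected_dist_to_bayes
    {Ω 𝒳 𝒜 : Type*} [MeasurableSpace Ω] [MeasurableSpace 𝒳] [MeasurableSpace 𝒜]
    (P : Measure Ω) [IsProbabilityMeasure P]
    (X : Ω → 𝒳) (A : Ω → 𝒜) (Y : Ω → ℝ)
    (hX : Measurable X) (hA : Measurable A) (hY : Measurable Y)
    (hY01 : ∀ ω, Y ω = 0 ∨ Y ω = 1)
    (f : 𝒳 → ℝ) (hf : Measurable f) (hf01 : ∀ x, f x ∈ Set.Icc (0 : ℝ) 1)
    (B : Ω → ℝ)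
    (hB : B = P[Y | MeasurableSpace.comap X inferInstance ⊔ MeasurableSpace.comap A inferInstance]) :
    ∫ ω, |(P[Y | MeasurableSpace.comap (f ∘ X) inferInstance]) ω -
        (P[Y | MeasurableSpace.comap (f ∘ X) inferInstance ⊔
              MeasurableSpace.comap A inferInstance]) ω| ∂P
      ≤ 4 * ∫ ω, |f (X ω) - B ω| ∂P := by
  have hfX : MeasurableSpace.comap (f ∘ X) inferInstance
      ≤ MeasurableSpace.comap X inferInstance := by
    rw [← MeasurableSpace.comap_comp]
    exact MeasurableSpace.comap_mono hf.comap_le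
  have hm1m : MeasurableSpace.comap (f ∘ X) inferInstance
      ≤ MeasurableSpace.comap X inferInstance ⊔ MeasurableSpace.comap A inferInstance :=
    hfX.trans le_sup_left
  have hm2m : MeasurableSpace.comap (f ∘ X) inferInstance ⊔ MeasurableSpace.comap A inferInstance
      ≤ MeasurableSpace.comap X inferInstance ⊔ MeasurableSpace.comap A inferInstance :=
    sup_le hm1m le_sup_right
  have hm : MeasurableSpace.comap X inferInstance ⊔ MeasurableSpace.comap A inferInstance
      ≤ (inferInstance : MeasurableSpace Ω) := sup_le hX.comap_le hA.comap_le
  -- integrability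
  have hYint : Integrable Y P := by
    refine (integrable_const (1 : ℝ)).mono' hY.aestronglyMeasurable (ae_of_all _ fun ω => ?_)
    rcases hY01 ω with h | h <;> simp [h]
  have hgint : Integrable (f ∘ X) P := by
    refine (integrable_const (1 : ℝ)).mono' ((hf.comp hX).aestronglyMeasurable)
      (ae_of_all _ fun ω => ?_)
    have := hf01 (X ω)
    simp only [Function.comp_apply, Real.norm_eq_abs]
    exact abs_le.2 ⟨by linarith [this.1], this.2⟩
  have hBint : Integrable B P := by rw [hB]; exact integrable_condExp
  -- f ∘ X is strongly measurable w.r.t. the relevant sub-σ-algebras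
  have hg1 : StronglyMeasurable[MeasurableSpace.comap (f ∘ X) inferInstance] (f ∘ X) :=
    (Measurable.of_comap_le le_rfl).stronglyMeasurable
  have hg2 : StronglyMeasurable[MeasurableSpace.comap (f ∘ X) inferInstance ⊔
      MeasurableSpace.comap A inferInstance] (f ∘ X) := hg1.mono le_sup_left
  -- key decomposition : P[Y|m'] =ᵐ P[B - f∘X | m'] + f∘X
  have step : ∀ m' : MeasurableSpace Ω,
      m' ≤ MeasurableSpace.comap X inferInstance ⊔ MeasurableSpace.comap A inferInstance →
      StronglyMeasurable[m'] (f ∘ X) →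
      P[Y | m'] =ᵐ[P] P[B - f ∘ X | m'] + f ∘ X := by
    intro m' hm'm hgm'
    have hm' := hm'm.trans hm
    have h1 : P[Y | m'] =ᵐ[P] P[B | m'] := by
      rw [hB]
      exact (condExp_condExp_of_le hm'm hm).symm
    have h2 : P[B - f ∘ X | m'] =ᵐ[P] P[B | m'] - P[f ∘ X | m'] := condExp_sub hBint hgint m'
    have h3 : P[f ∘ X | m'] = f ∘ X := condExp_of_stronglyMeasurable hm' hgm' hgint
    filter_upwards [h1, h2] with ω h1ω h2ω
    simp only [Pi.add_apply, Pi.sub_apply] at *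
    rw [h1ω, h2ω, h3]
    ring
  have key : (fun ω => (P[Y | MeasurableSpace.comap (f ∘ X) inferInstance]) ω -
        (P[Y | MeasurableSpace.comap (f ∘ X) inferInstance ⊔
              MeasurableSpace.comap A inferInstance]) ω) =ᵐ[P]
      fun ω => (P[B - f ∘ X | MeasurableSpace.comap (f ∘ X) inferInstance]) ω -
        (P[B - f ∘ X | MeasurableSpace.comap (f ∘ X) inferInstance ⊔
              MeasurableSpace.comap A inferInstance]) ω := by
    filter_upwards [step _ hm1m hg1, step _ hm2m hg2] with ω h1 h2
    simp only [Pi.add_apply, Function.comp_apply] at h1 h2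
    rw [h1, h2]; ring
  have habs : ∫ ω, |(P[Y | MeasurableSpace.comap (f ∘ X) inferInstance]) ω -
        (P[Y | MeasurableSpace.comap (f ∘ X) inferInstance ⊔
              MeasurableSpace.comap A inferInstance]) ω| ∂P
      = ∫ ω, |(P[B - f ∘ X | MeasurableSpace.comap (f ∘ X) inferInstance]) ω -
        (P[B - f ∘ X | MeasurableSpace.comap (f ∘ X) inferInstance ⊔
              MeasurableSpace.comap A inferInstance]) ω| ∂P := by
    refine integral_congr_ae ?_
    filter_upwards [key] with ω hω
    rw [hω]
  have hint1 : Integrable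
      (fun ω => |(P[B - f ∘ X | MeasurableSpace.comap (f ∘ X) inferInstance]) ω|) P :=
    integrable_condExp.abs
  have hint2 : Integrable (fun ω => |(P[B - f ∘ X | MeasurableSpace.comap (f ∘ X) inferInstance ⊔
      MeasurableSpace.comap A inferInstance]) ω|) P := integrable_condExp.abs
  have htri : ∫ ω, |(P[B - f ∘ X | MeasurableSpace.comap (f ∘ X) inferInstance]) ω -
        (P[B - f ∘ X | MeasurableSpace.comap (f ∘ X) inferInstance ⊔
              MeasurableSpace.comap A inferInstance]) ω| ∂P
      ≤ (∫ ω, |(P[B - f ∘ X | MeasurableSpace.comap (f ∘ X) inferInstance]) ω| ∂P) +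
        ∫ ω, |(P[B - f ∘ X | MeasurableSpace.comap (f ∘ X) inferInstance ⊔
              MeasurableSpace.comap A inferInstance]) ω| ∂P := by
    rw [← integral_add hint1 hint2]
    exact integral_mono (integrable_condExp.sub integrable_condExp).abs (hint1.add hint2)
      fun ω => abs_sub _ _
  have hD : ∫ ω, |(B - f ∘ X) ω| ∂P = ∫ ω, |f (X ω) - B ω| ∂P := by
    simp [abs_sub_comm]
  have hb1 : ∫ ω, |(P[B - f ∘ X | MeasurableSpace.comap (f ∘ X) inferInstance]) ω| ∂P
      ≤ ∫ ω, |f (X ω) - B ω| ∂P := hD ▸ integral_abs_condExp_le _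
  have hb2 : ∫ ω, |(P[B - f ∘ X | MeasurableSpace.comap (f ∘ X) inferInstance ⊔
        MeasurableSpace.comap A inferInstance]) ω| ∂P
      ≤ ∫ ω, |f (X ω) - B ω| ∂P := hD ▸ integral_abs_condExp_le _
  have hnn : 0 ≤ ∫ ω, |f (X ω) - B ω| ∂P := integral_nonneg fun ω => abs_nonneg _
  rw [habs]
  calc _ ≤ _ := htri
    _ ≤ (∫ ω, |f (X ω) - B ω| ∂P) + ∫ ω, |f (X ω) - B ω| ∂P := add_le_add hb1 hb2
    _ ≤ 4 * ∫ ω, |f (X ω) - B ω| ∂P := by linarith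
end

section
/- Suppose in addition that 𝒜 is a finite set with |𝒜| = n, every singleton of 𝒜 is measurable, and A is uniformly distributed, i.e. P(A = a) = 1/n for every a ∈ 𝒜. Then for every measurable predictor f : 𝒳 → [0,1], Suf_f ≤ (4/n)·Σ_{a∈𝒜} E[|f(X) − B| | A = a], where E[· | A = a] denotes expectation under the conditional probability measure P(· | A = a). (Theorem 1, second part.) -/
open MeasureTheory ProbabilityTheory
open scoped ENNReal

private lemma suf_aux {Ω : Type*} {m0 : MeasurableSpace Ω}
    (P : Measure Ω) [IsProbabilityMeasure P]
    (m₁ m₂ mBig : MeasurableSpace Ω) (h1 : m₁ ≤ mBig) (h2 : m₂ ≤ mBig) (hBig : mBig ≤ m0)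
    (Y B φ : Ω → ℝ) (hBint : Integrable B P) (hφint : Integrable φ P)
    (hB : B = P[Y|mBig]) (hφ1 : StronglyMeasurable[m₁] φ) (hφ2 : StronglyMeasurable[m₂] φ) :
    ∫ ω, |(P[Y|m₁]) ω - (P[Y|m₂]) ω| ∂P ≤ 2 * ∫ ω, |B ω - φ ω| ∂P := by
  have hm1 : m₁ ≤ m0 := h1.trans hBig
  have hm2 : m₂ ≤ m0 := h2.trans hBig
  set g : Ω → ℝ := fun ω => B ω - φ ω with hg_def
  have hgint : Integrable g P := hBint.sub hφint
  have ht1 : P[Y|m₁] =ᵐ[P] P[B|m₁] := by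
    rw [hB]; exact (condExp_condExp_of_le h1 hBig).symm
  have ht2 : P[Y|m₂] =ᵐ[P] P[B|m₂] := by
    rw [hB]; exact (condExp_condExp_of_le h2 hBig).symm
  have hφc1 : P[φ|m₁] = φ := condExp_of_stronglyMeasurable hm1 hφ1 hφint
  have hφc2 : P[φ|m₂] = φ := condExp_of_stronglyMeasurable hm2 hφ2 hφint
  have h3 : P[g|m₁] =ᵐ[P] fun ω => (P[Y|m₁]) ω - φ ω := by
    refine (condExp_sub hBint hφint m₁).trans ?_
    filter_upwards [ht1] with ω hω
    simp [hφc1, hω]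
  have h4 : P[g|m₂] =ᵐ[P] fun ω => (P[Y|m₂]) ω - φ ω := by
    refine (condExp_sub hBint hφint m₂).trans ?_
    filter_upwards [ht2] with ω hω
    simp [hφc2, hω]
  have heq : ∀ᵐ ω ∂P, |(P[Y|m₁]) ω - (P[Y|m₂]) ω| = |(P[g|m₁]) ω - (P[g|m₂]) ω| := by
    filter_upwards [h3, h4] with ω h3ω h4ω
    rw [h3ω, h4ω]; ring_nf
  rw [integral_congr_ae heq]
  have hb : ∫ ω, |(P[g|m₁]) ω - (P[g|m₂]) ω| ∂P
      ≤ ∫ ω, |(P[g|m₁]) ω| ∂P + ∫ ω, |(P[g|m₂]) ω| ∂P := by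
    rw [← integral_add integrable_condExp.abs integrable_condExp.abs]
    refine integral_mono_ae (integrable_condExp.sub integrable_condExp).abs
      (integrable_condExp.abs.add integrable_condExp.abs) ?_
    filter_upwards with ω
    exact abs_sub _ _
  refine hb.trans ?_
  have e1 := integral_abs_condExp_le (μ := P) (m := m₁) g
  have e2 := integral_abs_condExp_le (μ := P) (m := m₂) g
  linarith

/-- **Theorem 1 (second part).** If `𝒜` is finite with `|𝒜| = n`, singletons measurable, and
`A` is uniformly distributed (`P(A = a) = 1/n`), then for every measurable predictor
`f : 𝒳 → [0,1]`, `Suf_f ≤ (4/n) · Σ_{a ∈ 𝒜} E[|f(X) − B| | A = a]`. -/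
theorem suf_gap_le_four_div_card_mul_sum_cond_expected_dist_to_bayes
    {Ω 𝒳 𝒜 : Type*} [MeasurableSpace Ω] [MeasurableSpace 𝒳] [MeasurableSpace 𝒜]
    [Fintype 𝒜] [MeasurableSingletonClass 𝒜]
    (P : Measure Ω) [IsProbabilityMeasure P]
    (X : Ω → 𝒳) (A : Ω → 𝒜) (Y : Ω → ℝ)
    (hX : Measurable X) (hA : Measurable A) (hY : Measurable Y)
    (hY01 : ∀ ω, Y ω = 0 ∨ Y ω = 1)
    (n : ℕ) (hn : 1 ≤ n) (hcard : Fintype.card 𝒜 = n)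
    (hunif : ∀ a : 𝒜, P (A ⁻¹' {a}) = 1 / n)
    (f : 𝒳 → ℝ) (hf : Measurable f) (hf01 : ∀ x, f x ∈ Set.Icc (0 : ℝ) 1)
    (B : Ω → ℝ)
    (hB : B = P[Y | MeasurableSpace.comap X inferInstance ⊔ MeasurableSpace.comap A inferInstance]) :
    ∫ ω, |(P[Y | MeasurableSpace.comap (f ∘ X) inferInstance]) ω -
        (P[Y | MeasurableSpace.comap (f ∘ X) inferInstance ⊔
              MeasurableSpace.comap A inferInstance]) ω| ∂P
      ≤ (4 / n) * ∑ a : 𝒜, ∫ ω, |f (X ω) - B ω| ∂(P[|A ⁻¹' {a}]) := by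
  have hmf_le_X : MeasurableSpace.comap (f ∘ X) inferInstance
      ≤ MeasurableSpace.comap X inferInstance := by
    rw [← MeasurableSpace.comap_comp]
    exact MeasurableSpace.comap_mono hf.comap_le
  have hBint : Integrable B P := hB ▸ integrable_condExp
  have hfXint : Integrable (fun ω => f (X ω)) P := by
    refine ⟨(hf.comp hX).aestronglyMeasurable, HasFiniteIntegral.of_bounded (C := 1) ?_⟩
    filter_upwards with ω
    have := hf01 (X ω)
    rw [Real.norm_eq_abs, abs_le]
    constructor <;> linarith [this.1, this.2]
  have hmeas : Measurable[MeasurableSpace.comap (f ∘ X) inferInstance] (f ∘ X) :=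
    measurable_iff_comap_le.mpr le_rfl
  have hsmf : StronglyMeasurable[MeasurableSpace.comap (f ∘ X) inferInstance]
      (fun ω => f (X ω)) := hmeas.stronglyMeasurable
  have hLHS := suf_aux P
    (MeasurableSpace.comap (f ∘ X) inferInstance)
    (MeasurableSpace.comap (f ∘ X) inferInstance ⊔ MeasurableSpace.comap A inferInstance)
    (MeasurableSpace.comap X inferInstance ⊔ MeasurableSpace.comap A inferInstance)
    (hmf_le_X.trans le_sup_left)
    (sup_le (hmf_le_X.trans le_sup_left) le_sup_right)
    (sup_le hX.comap_le hA.comap_le)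
    Y B (fun ω => f (X ω)) hBint hfXint hB hsmf (hsmf.mono le_sup_left)
  have hgabs_int : Integrable (fun ω => |f (X ω) - B ω|) P := (hfXint.sub hBint).abs
  have hpart : ∫ ω, |f (X ω) - B ω| ∂P = ∑ a : 𝒜, ∫ ω in A ⁻¹' {a}, |f (X ω) - B ω| ∂P := by
    rw [← integral_biUnion_finset Finset.univ (fun a _ => hA (measurableSet_singleton a))
      ?_ (fun a _ => hgabs_int.integrableOn)]
    · rw [show (⋃ a ∈ Finset.univ, A ⁻¹' {a}) = Set.univ from ?_, Measure.restrict_univ]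
      ext ω; simp
    · intro a _ b _ hab
      exact Set.disjoint_left.mpr (fun ω ha hb => hab (by simp_all))
  have hn0 : (n : ℝ≥0∞) ≠ 0 := by exact_mod_cast Nat.one_le_iff_ne_zero.mp hn
  have hcond : ∀ a : 𝒜, ∫ ω, |f (X ω) - B ω| ∂(P[|A ⁻¹' {a}])
      = (n : ℝ) * ∫ ω in A ⁻¹' {a}, |f (X ω) - B ω| ∂P := by
    intro a
    rw [ProbabilityTheory.cond, integral_smul_measure, hunif a]
    congr 1
    rw [one_div, inv_inv]
    simp
  have hnR : (0 : ℝ) < n := by exact_mod_cast hn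
  calc ∫ ω, |(P[Y | MeasurableSpace.comap (f ∘ X) inferInstance]) ω -
        (P[Y | MeasurableSpace.comap (f ∘ X) inferInstance ⊔
              MeasurableSpace.comap A inferInstance]) ω| ∂P
      ≤ 2 * ∫ ω, |B ω - f (X ω)| ∂P := hLHS
    _ = 2 * ∫ ω, |f (X ω) - B ω| ∂P := by
        congr 1; apply integral_congr_ae; filter_upwards with ω; exact abs_sub_comm _ _
    _ ≤ 4 * ∫ ω, |f (X ω) - B ω| ∂P := by
        have : 0 ≤ ∫ ω, |f (X ω) - B ω| ∂P := integral_nonneg fun ω => abs_nonneg _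
        linarith
    _ = (4 / n) * ∑ a : 𝒜, ∫ ω, |f (X ω) - B ω| ∂(P[|A ⁻¹' {a}]) := by
        simp_rw [hcond, ← Finset.mul_sum, hpart]
        field_simp
end

section
/- Let Θ be a measurable space (a space of predictor parameters), g : Θ × 𝒳 → [0,1] jointly measurable, and suppose 𝒜 is finite with |𝒜| = n, singletons measurable, and P(A = a) = 1/n for all a ∈ 𝒜. Let Q be a probability measure on Θ and define the randomized predictor f : 𝒳 → [0,1] by f(x) := ∫_Θ g(θ, x) dQ(θ). For each a ∈ 𝒜, let Q*_a and μ_a be probability measures on Θ, and assume that μ_a represents the subgroup conditional distribution in the sense that P-almost surely on the event {A = a}, ∫_Θ g(θ, X(ω)) dμ_a(θ) = B(ω), where B = E[Y | σ(X,A)]. Then the group sufficiency gap of f satisfies Suf_f ≤ (2√2 / n)·Σ_{a∈𝒜} ( √(KL(Q*_a ‖ Q)) + √(KL(Q*_a ‖ μ_a)) ), where KL denotes Kullback–Leibler divergence (equal to +∞ in case of non-absolute-continuity, in which case the bound is trivial). (Corollary 1.) -/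
open MeasureTheory ProbabilityTheory
open scoped ENNReal NNReal Classical

/-- The Kullback–Leibler divergence between two measures, with value `∞` when the first is not
absolutely continuous with respect to the second (or the log-likelihood ratio is not
integrable). -/

noncomputable def klDiv {Θ : Type*} [MeasurableSpace Θ] (μ ν : MeasureTheory.Measure Θ) : ℝ≥0∞ :=
  if μ ≪ ν ∧ MeasureTheory.Integrable (MeasureTheory.llr μ ν) μ then
    ENNReal.ofReal (∫ θ, MeasureTheory.llr μ ν θ ∂μ) else ∞


lemma pt_ineq {x : ℝ} (hx : 0 ≤ x) :
    (x - 1) ^ 2 / (2 * (x + 3)) ≤ x * Real.log x - x + 1 := by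
  rcases eq_or_lt_of_le hx with h0 | h0
  · rw [← h0]
    norm_num [Real.log_zero]
  · set s := Real.sqrt x with hs
    have hs0 : 0 < s := Real.sqrt_pos.mpr h0
    have hs2 : s ^ 2 = x := Real.sq_sqrt hx
    have hls : 1 - s⁻¹ ≤ Real.log s := by
      have h1 : Real.log (1 / s) ≤ 1 / s - 1 :=
        Real.log_le_sub_one_of_pos (by positivity)
      rw [one_div, Real.log_inv] at h1
      linarith
    have hlog : Real.log x = 2 * Real.log s := by
      rw [hs, Real.log_sqrt hx]; ring
    have key : s - 1 ≤ s * Real.log s := by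
      have := mul_le_mul_of_nonneg_left hls hs0.le
      have hss : s * (1 - s⁻¹) = s - 1 := by field_simp
      linarith [hss ▸ this]
    have hL : 2 * s * (s - 1) ≤ x * Real.log x := by
      have : x * Real.log x = 2 * s * (s * Real.log s) := by
        rw [hlog, ← hs2]; ring
      nlinarith
    rw [div_le_iff₀ (by positivity)]
    nlinarith [sq_nonneg (s - 1), sq_nonneg ((s - 1) ^ 2), mul_nonneg (sq_nonneg (s-1)) (sq_nonneg (s-1)), hs2]

lemma pinsker_aux {Θ : Type*} [MeasurableSpace Θ] (μ ν : Measure Θ)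
    [IsProbabilityMeasure μ] [IsProbabilityMeasure ν]
    (hac : μ ≪ ν) (hint : Integrable (llr μ ν) μ) :
    0 ≤ ∫ θ, llr μ ν θ ∂μ ∧
    ∫ θ, |(μ.rnDeriv ν θ).toReal - 1| ∂ν
      ≤ 2 * Real.sqrt 2 * Real.sqrt (∫ θ, llr μ ν θ ∂μ) := by
  set ρ : Θ → ℝ := fun θ => (μ.rnDeriv ν θ).toReal with hρ
  have hρm : Measurable ρ := (Measure.measurable_rnDeriv μ ν).ennreal_toReal
  have hρ0 : ∀ θ, 0 ≤ ρ θ := fun θ => ENNReal.toReal_nonneg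
  have hρint : Integrable ρ ν := Measure.integrable_toReal_rnDeriv
  have hρ1 : ∫ θ, ρ θ ∂ν = 1 := by
    rw [Measure.integral_toReal_rnDeriv hac]; simp
  have hcv : ∫ θ, ρ θ * Real.log (ρ θ) ∂ν = ∫ θ, llr μ ν θ ∂μ := by
    simpa [smul_eq_mul, llr_def] using MeasureTheory.integral_rnDeriv_smul hac (f := llr μ ν)
  have hρlog_int : Integrable (fun θ => ρ θ * Real.log (ρ θ)) ν := by
    simpa [smul_eq_mul, llr_def] using (MeasureTheory.integrable_rnDeriv_smul_iff hac).mpr hint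
  set φρ : Θ → ℝ := fun θ => ρ θ * Real.log (ρ θ) - ρ θ + 1 with hφρ
  have hφint : Integrable φρ ν := (hρlog_int.sub hρint).add (integrable_const 1)
  have hφeq : ∫ θ, φρ θ ∂ν = ∫ θ, llr μ ν θ ∂μ := by
    rw [hφρ]
    beta_reduce
    have hsub : Integrable (fun θ => ρ θ * Real.log (ρ θ) - ρ θ) ν := hρlog_int.sub hρint
    rw [integral_add hsub (integrable_const 1), integral_sub hρlog_int hρint, hρ1, hcv]
    simp
  set u : Θ → ℝ := fun θ => (ρ θ - 1) ^ 2 / (2 * (ρ θ + 3)) with hu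
  set v : Θ → ℝ := fun θ => 2 * (ρ θ + 3) with hv
  have hu0 : ∀ θ, 0 ≤ u θ := fun θ => by positivity
  have hv0 : ∀ θ, 0 ≤ v θ := fun θ => by positivity
  have huφ : ∀ θ, u θ ≤ φρ θ := fun θ => pt_ineq (hρ0 θ)
  have hφ0 : ∀ θ, 0 ≤ φρ θ := fun θ => le_trans (hu0 θ) (huφ θ)
  have hKL0 : 0 ≤ ∫ θ, llr μ ν θ ∂μ := by
    rw [← hφeq]; exact integral_nonneg hφ0
  refine ⟨hKL0, ?_⟩
  have hum : Measurable u :=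
    ((hρm.sub measurable_const).pow measurable_const).div
      (measurable_const.mul (hρm.add measurable_const))
  have hvm : Measurable v := measurable_const.mul (hρm.add measurable_const)
  have hu_int : Integrable u ν := by
    refine hφint.mono' hum.aestronglyMeasurable (ae_of_all _ fun θ => ?_)
    rw [Real.norm_eq_abs, abs_of_nonneg (hu0 θ)]; exact huφ θ
  have hv_int : Integrable v ν := (hρint.add (integrable_const 3)).const_mul 2
  have hvint : ∫ θ, v θ ∂ν = 8 := by
    rw [hv, integral_const_mul, integral_add hρint (integrable_const 3), hρ1]
    norm_num
  set F : Θ → ℝ≥0∞ := fun θ => (ENNReal.ofReal (u θ)) ^ (1/2 : ℝ) with hF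
  set G : Θ → ℝ≥0∞ := fun θ => (ENNReal.ofReal (v θ)) ^ (1/2 : ℝ) with hG
  have hFG : ∀ θ, ENNReal.ofReal |ρ θ - 1| = F θ * G θ := by
    intro θ
    have huv : u θ * v θ = (ρ θ - 1) ^ 2 := by
      have h3 : ρ θ + 3 ≠ 0 := (by linarith [hρ0 θ] : (0:ℝ) < ρ θ + 3).ne'
      rw [hu, hv]; field_simp
    rw [hF, hG, ← ENNReal.mul_rpow_of_nonneg _ _ (by norm_num : (0:ℝ) ≤ 1/2),
      ← ENNReal.ofReal_mul (hu0 θ), huv, ← sq_abs (ρ θ - 1),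
      ← Real.rpow_natCast |ρ θ - 1| 2,
      ← ENNReal.ofReal_rpow_of_nonneg (abs_nonneg _) (by norm_num : (0:ℝ) ≤ (2:ℕ)),
      ← ENNReal.rpow_mul]
    norm_num
  have habs_int : Integrable (fun θ => |ρ θ - 1|) ν := (hρint.sub (integrable_const 1)).abs
  have hCS := ENNReal.lintegral_mul_le_Lp_mul_Lq ν
    (Real.HolderConjugate.two_two : Real.HolderConjugate 2 2)
    (by fun_prop : AEMeasurable F ν) (by fun_prop : AEMeasurable G ν)
  have hF2 : ∀ θ, F θ ^ (2:ℝ) = ENNReal.ofReal (u θ) := by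
    intro θ; rw [hF, ← ENNReal.rpow_mul]; norm_num
  have hG2 : ∀ θ, G θ ^ (2:ℝ) = ENNReal.ofReal (v θ) := by
    intro θ; rw [hG, ← ENNReal.rpow_mul]; norm_num
  have hFint : ∫⁻ θ, F θ ^ (2:ℝ) ∂ν = ENNReal.ofReal (∫ θ, u θ ∂ν) := by
    simp_rw [hF2]
    rw [← ofReal_integral_eq_lintegral_ofReal hu_int (ae_of_all _ hu0)]
  have hGint : ∫⁻ θ, G θ ^ (2:ℝ) ∂ν = ENNReal.ofReal 8 := by
    simp_rw [hG2]
    rw [← ofReal_integral_eq_lintegral_ofReal hv_int (ae_of_all _ hv0), hvint]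
  have hKL : (∫ θ, u θ ∂ν) ≤ ∫ θ, llr μ ν θ ∂μ := by
    rw [← hφeq]; exact integral_mono hu_int hφint huφ
  have key : ENNReal.ofReal (∫ θ, |ρ θ - 1| ∂ν)
      ≤ ENNReal.ofReal (2 * Real.sqrt 2 * Real.sqrt (∫ θ, llr μ ν θ ∂μ)) := by
    calc ENNReal.ofReal (∫ θ, |ρ θ - 1| ∂ν)
        = ∫⁻ θ, ENNReal.ofReal |ρ θ - 1| ∂ν :=
          ofReal_integral_eq_lintegral_ofReal habs_int (ae_of_all _ fun θ => abs_nonneg _)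
      _ = ∫⁻ θ, F θ * G θ ∂ν := by simp_rw [hFG]
      _ ≤ (∫⁻ θ, F θ ^ (2:ℝ) ∂ν) ^ (1/2 : ℝ) * (∫⁻ θ, G θ ^ (2:ℝ) ∂ν) ^ (1/2 : ℝ) := by
          simpa using hCS
      _ ≤ (ENNReal.ofReal (∫ θ, llr μ ν θ ∂μ)) ^ (1/2 : ℝ) * (ENNReal.ofReal 8) ^ (1/2 : ℝ) := by
          rw [hFint, hGint]
          exact mul_le_mul_left (ENNReal.rpow_le_rpow (ENNReal.ofReal_le_ofReal hKL) (by norm_num)) _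
      _ = ENNReal.ofReal (2 * Real.sqrt 2 * Real.sqrt (∫ θ, llr μ ν θ ∂μ)) := by
          rw [ENNReal.ofReal_rpow_of_nonneg hKL0 (by norm_num),
            ENNReal.ofReal_rpow_of_nonneg (by norm_num : (0:ℝ) ≤ 8) (by norm_num),
            ← ENNReal.ofReal_mul (by positivity)]
          congr 1
          rw [← Real.sqrt_eq_rpow, ← Real.sqrt_eq_rpow]
          rw [show (8:ℝ) = 2^2*2 by norm_num, Real.sqrt_mul (by positivity),
            Real.sqrt_sq (by norm_num)]
          ring
  have := (ENNReal.ofReal_le_ofReal_iff (by positivity)).mp key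
  exact this

lemma integral_diff_le_pinsker {Θ : Type*} [MeasurableSpace Θ] (μ ν : Measure Θ)
    [IsProbabilityMeasure μ] [IsProbabilityMeasure ν]
    (hac : μ ≪ ν) (hint : Integrable (llr μ ν) μ)
    (h : Θ → ℝ) (hm : Measurable h) (h01 : ∀ θ, h θ ∈ Set.Icc (0:ℝ) 1) :
    |∫ θ, h θ ∂μ - ∫ θ, h θ ∂ν| ≤ Real.sqrt 2 * Real.sqrt (∫ θ, llr μ ν θ ∂μ) := by
  obtain ⟨hKL0, hpin⟩ := pinsker_aux μ ν hac hint
  set ρ : Θ → ℝ := fun θ => (μ.rnDeriv ν θ).toReal with hρ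
  have hρm : Measurable ρ := (Measure.measurable_rnDeriv μ ν).ennreal_toReal
  have hρint : Integrable ρ ν := Measure.integrable_toReal_rnDeriv
  have hρ1 : ∫ θ, ρ θ ∂ν = 1 := by
    rw [Measure.integral_toReal_rnDeriv hac]; simp
  have hint_μ : Integrable h μ := by
    refine (integrable_const (1:ℝ)).mono' hm.aestronglyMeasurable (ae_of_all _ fun θ => ?_)
    rw [Real.norm_eq_abs, abs_of_nonneg (h01 θ).1]; exact (h01 θ).2
  have hint_ν : Integrable h ν := by
    refine (integrable_const (1:ℝ)).mono' hm.aestronglyMeasurable (ae_of_all _ fun θ => ?_)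
    rw [Real.norm_eq_abs, abs_of_nonneg (h01 θ).1]; exact (h01 θ).2
  have hρh_int : Integrable (fun θ => ρ θ * h θ) ν := by
    simpa [smul_eq_mul] using (MeasureTheory.integrable_rnDeriv_smul_iff hac).mpr hint_μ
  have hcv : ∫ θ, ρ θ * h θ ∂ν = ∫ θ, h θ ∂μ := by
    simpa [smul_eq_mul] using MeasureTheory.integral_rnDeriv_smul hac (f := h)
  have habs_int : Integrable (fun θ => |ρ θ - 1|) ν := (hρint.sub (integrable_const 1)).abs
  have heq : ∫ θ, h θ ∂μ - ∫ θ, h θ ∂ν = ∫ θ, (h θ - 1/2) * (ρ θ - 1) ∂ν := by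
    have hfe : (fun θ => (h θ - 1/2) * (ρ θ - 1))
        = fun θ => (ρ θ * h θ - h θ) - ((1/2) * ρ θ - 1/2) := by
      funext θ; ring
    have i1 : Integrable (fun θ => ρ θ * h θ - h θ) ν := hρh_int.sub hint_ν
    have i3 : Integrable (fun θ => (1/2 : ℝ) * ρ θ) ν := hρint.const_mul _
    have i2 : Integrable (fun θ => (1/2 : ℝ) * ρ θ - 1/2) ν := i3.sub (integrable_const _)
    rw [hfe, integral_sub i1 i2, integral_sub hρh_int hint_ν,
      integral_sub i3 (integrable_const _), integral_const_mul, hρ1, hcv]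
    simp
  have hprod_int : Integrable (fun θ => (h θ - 1/2) * (ρ θ - 1)) ν := by
    refine (habs_int.const_mul (1/2)).mono'
      (((hm.sub measurable_const).mul (hρm.sub measurable_const)).aestronglyMeasurable)
      (ae_of_all _ fun θ => ?_)
    rw [Real.norm_eq_abs, abs_mul]
    have h1 : |h θ - 1/2| ≤ 1/2 := by
      rw [abs_le]; constructor <;> [linarith [(h01 θ).1]; linarith [(h01 θ).2]]
    calc |h θ - 1/2| * |ρ θ - 1| ≤ (1/2) * |ρ θ - 1| :=
          mul_le_mul_of_nonneg_right h1 (abs_nonneg _)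
      _ = 1/2 * |ρ θ - 1| := by ring
  calc |∫ θ, h θ ∂μ - ∫ θ, h θ ∂ν| = |∫ θ, (h θ - 1/2) * (ρ θ - 1) ∂ν| := by rw [heq]
    _ ≤ ∫ θ, |(h θ - 1/2) * (ρ θ - 1)| ∂ν := by
        simpa only [Real.norm_eq_abs] using
          norm_integral_le_integral_norm (μ := ν) (fun θ => (h θ - 1/2) * (ρ θ - 1))
    _ ≤ ∫ θ, (1/2) * |ρ θ - 1| ∂ν := by
        refine integral_mono hprod_int.abs (habs_int.const_mul _) (fun θ => ?_)
        rw [abs_mul]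
        refine mul_le_mul_of_nonneg_right ?_ (abs_nonneg _)
        rw [abs_le]; constructor <;> [linarith [(h01 θ).1]; linarith [(h01 θ).2]]
    _ = (1/2) * ∫ θ, |ρ θ - 1| ∂ν := integral_const_mul _ _
    _ ≤ (1/2) * (2 * Real.sqrt 2 * Real.sqrt (∫ θ, llr μ ν θ ∂μ)) := by
        exact mul_le_mul_of_nonneg_left hpin (by norm_num)
    _ = Real.sqrt 2 * Real.sqrt (∫ θ, llr μ ν θ ∂μ) := by ring

lemma gap_bound {Ω : Type*} {mΩ : MeasurableSpace Ω} (P : Measure Ω) [IsProbabilityMeasure P]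
    {m1 m2 M : MeasurableSpace Ω} (hm12 : m1 ≤ m2) (hm2M : m2 ≤ M) (hMle : M ≤ mΩ)
    (Y F : Ω → ℝ) (hFint : Integrable F P)
    (hFsm1 : StronglyMeasurable[m1] F) :
    ∫ ω, |(P[Y|m1]) ω - (P[Y|m2]) ω| ∂P ≤ 2 * ∫ ω, |(P[Y|M]) ω - F ω| ∂P := by
  have hm1M : m1 ≤ M := hm12.trans hm2M
  have hm1le : m1 ≤ mΩ := hm1M.trans hMle
  have hm2le : m2 ≤ mΩ := hm2M.trans hMle
  set B : Ω → ℝ := P[Y|M] with hBdef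
  have hBint : Integrable B P := integrable_condExp
  set D : Ω → ℝ := fun ω => B ω - F ω with hDdef
  have hDint : Integrable D P := hBint.sub hFint
  have hc1 : P[Y | m1] =ᵐ[P] P[B | m1] := (condExp_condExp_of_le hm1M hMle).symm
  have hc2 : P[Y | m2] =ᵐ[P] P[B | m2] := (condExp_condExp_of_le hm2M hMle).symm
  have hcf1 : P[F | m1] = F := condExp_of_stronglyMeasurable hm1le hFsm1 hFint
  have hcf2 : P[F | m2] = F := condExp_of_stronglyMeasurable hm2le (hFsm1.mono hm12) hFint
  have hE1 : P[Y | m1] =ᵐ[P] fun ω => (P[D | m1]) ω + F ω := by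
    have hsub := condExp_sub (m := m1) (μ := P) hBint hFint
    filter_upwards [hc1, hsub] with ω h1 h2
    have h3 : (P[D | m1]) ω = (P[B | m1]) ω - (P[F | m1]) ω := h2
    rw [h1, h3, hcf1]; simp
  have hE2 : P[Y | m2] =ᵐ[P] fun ω => (P[D | m2]) ω + F ω := by
    have hsub := condExp_sub (m := m2) (μ := P) hBint hFint
    filter_upwards [hc2, hsub] with ω h1 h2
    have h3 : (P[D | m2]) ω = (P[B | m2]) ω - (P[F | m2]) ω := h2
    rw [h1, h3, hcf2]; simp
  have hcongr : ∫ ω, |(P[Y | m1]) ω - (P[Y | m2]) ω| ∂P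
      = ∫ ω, |(P[D | m1]) ω - (P[D | m2]) ω| ∂P := by
    refine integral_congr_ae ?_
    filter_upwards [hE1, hE2] with ω h1 h2
    rw [h1, h2]; ring_nf
  rw [hcongr]
  have habs1 : ∫ ω, |(P[D | m1]) ω| ∂P ≤ ∫ ω, |D ω| ∂P := integral_abs_condExp_le D
  have habs2 : ∫ ω, |(P[D | m2]) ω| ∂P ≤ ∫ ω, |D ω| ∂P := integral_abs_condExp_le D
  have htri : ∫ ω, |(P[D | m1]) ω - (P[D | m2]) ω| ∂P
      ≤ ∫ ω, (|(P[D | m1]) ω| + |(P[D | m2]) ω|) ∂P := by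
    refine integral_mono ((integrable_condExp.sub integrable_condExp).abs)
      (integrable_condExp.abs.add integrable_condExp.abs) fun ω => ?_
    exact abs_sub _ _
  rw [integral_add integrable_condExp.abs integrable_condExp.abs] at htri
  have : ∫ ω, |(P[Y|M]) ω - F ω| ∂P = ∫ ω, |D ω| ∂P := rfl
  rw [this]
  linarith


/-- **Corollary 1.** The group sufficiency gap of the randomized predictor
`f(x) = ∫ g(θ,x) dQ(θ)` is bounded by
`(2√2/n) · Σ_a (√KL(Q*_a ‖ Q) + √KL(Q*_a ‖ μ_a))`, where `μ_a` represents the subgroup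
conditional distribution on the event `{A = a}`. -/
theorem suf_gap_randomized_le_kl_bound
    {Ω 𝒳 𝒜 Θ : Type*} [MeasurableSpace Ω] [MeasurableSpace 𝒳] [MeasurableSpace 𝒜]
    [MeasurableSpace Θ] [Fintype 𝒜] [MeasurableSingletonClass 𝒜]
    (P : Measure Ω) [IsProbabilityMeasure P]
    (X : Ω → 𝒳) (A : Ω → 𝒜) (Y : Ω → ℝ)
    (hX : Measurable X) (hA : Measurable A) (hY : Measurable Y)
    (hY01 : ∀ ω, Y ω = 0 ∨ Y ω = 1)
    (n : ℕ) (hn : 1 ≤ n) (hcard : Fintype.card 𝒜 = n)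
    (hunif : ∀ a : 𝒜, P (A ⁻¹' {a}) = 1 / n)
    (g : Θ → 𝒳 → ℝ) (hg : Measurable (Function.uncurry g))
    (hg01 : ∀ θ x, g θ x ∈ Set.Icc (0 : ℝ) 1)
    (Q : Measure Θ) [IsProbabilityMeasure Q]
    (Qstar : 𝒜 → Measure Θ) (hQstar : ∀ a, IsProbabilityMeasure (Qstar a))
    (μa : 𝒜 → Measure Θ) (hμa : ∀ a, IsProbabilityMeasure (μa a))
    (f : 𝒳 → ℝ) (hfdef : ∀ x, f x = ∫ θ, g θ x ∂Q)
    (B : Ω → ℝ)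
    (hB : B = P[Y | MeasurableSpace.comap X inferInstance ⊔ MeasurableSpace.comap A inferInstance])
    (hrep : ∀ a : 𝒜, ∀ᵐ ω ∂P, A ω = a → ∫ θ, g θ (X ω) ∂(μa a) = B ω) :
    ENNReal.ofReal (∫ ω, |(P[Y | MeasurableSpace.comap (f ∘ X) inferInstance]) ω -
        (P[Y | MeasurableSpace.comap (f ∘ X) inferInstance ⊔
              MeasurableSpace.comap A inferInstance]) ω| ∂P)
      ≤ (ENNReal.ofReal (2 * Real.sqrt 2) / n) *
          ∑ a : 𝒜, ((klDiv (Qstar a) Q) ^ (1 / 2 : ℝ) + (klDiv (Qstar a) (μa a)) ^ (1 / 2 : ℝ)) := by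
  haveI := hQstar; haveI := hμa
  have hn0 : (0:ℝ) < n := by exact_mod_cast hn
  by_cases hfin : ∀ a : 𝒜, (Qstar a ≪ Q ∧ Integrable (llr (Qstar a) Q) (Qstar a)) ∧
      (Qstar a ≪ μa a ∧ Integrable (llr (Qstar a) (μa a)) (Qstar a))
  case neg =>
    -- some KL is infinite, RHS = ⊤
    push_neg at hfin
    obtain ⟨a0, ha0⟩ := hfin
    have hsummand : (klDiv (Qstar a0) Q) ^ (1 / 2 : ℝ) + (klDiv (Qstar a0) (μa a0)) ^ (1 / 2 : ℝ) = ⊤ := by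
      by_cases h1 : Qstar a0 ≪ Q ∧ Integrable (llr (Qstar a0) Q) (Qstar a0)
      · have h2 : ¬(Qstar a0 ≪ μa a0 ∧ Integrable (llr (Qstar a0) (μa a0)) (Qstar a0)) :=
          fun h2' => ha0 h1 h2'.1 h2'.2
        have : klDiv (Qstar a0) (μa a0) = ⊤ := by rw [klDiv, if_neg h2]
        rw [this, ENNReal.top_rpow_of_pos (by norm_num)]
        simp
      · have : klDiv (Qstar a0) Q = ⊤ := by rw [klDiv, if_neg h1]
        rw [this, ENNReal.top_rpow_of_pos (by norm_num)]
        simp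
    have hsum : ∑ a : 𝒜, ((klDiv (Qstar a) Q) ^ (1 / 2 : ℝ) + (klDiv (Qstar a) (μa a)) ^ (1 / 2 : ℝ)) = ⊤ :=
      ENNReal.sum_eq_top.mpr ⟨a0, Finset.mem_univ _, hsummand⟩
    have hc0 : (ENNReal.ofReal (2 * Real.sqrt 2) / n) ≠ 0 := by
      rw [ne_eq, ENNReal.div_eq_zero_iff]
      push_neg
      constructor
      · simp only [ne_eq, ENNReal.ofReal_eq_zero, not_le]
        positivity
      · exact ENNReal.natCast_ne_top n
    rw [hsum, ENNReal.mul_top hc0]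
    exact le_top
  case pos =>
  have hgx_meas : ∀ x, Measurable (fun θ => g θ x) := fun x =>
    hg.comp (measurable_id.prodMk measurable_const)
  have hgx_int : ∀ (x : 𝒳) (m : Measure Θ), IsProbabilityMeasure m →
      Integrable (fun θ => g θ x) m := by
    intro x m hm
    refine (integrable_const (1:ℝ)).mono' (hgx_meas x).aestronglyMeasurable
      (ae_of_all _ fun θ => ?_)
    rw [Real.norm_eq_abs, abs_of_nonneg (hg01 θ x).1]
    exact (hg01 θ x).2
  have hf_meas : Measurable f := by
    have hfe : f = fun x => ∫ θ, Function.uncurry g (θ, x) ∂Q := by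
      funext x; rw [hfdef x]; rfl
    rw [hfe]
    exact hg.stronglyMeasurable.integral_prod_left'.measurable
  have hf01 : ∀ x, f x ∈ Set.Icc (0:ℝ) 1 := by
    intro x
    rw [hfdef x]
    constructor
    · exact integral_nonneg fun θ => (hg01 θ x).1
    · calc ∫ θ, g θ x ∂Q ≤ ∫ _θ, (1:ℝ) ∂Q :=
            integral_mono (hgx_int x Q inferInstance) (integrable_const 1) fun θ => (hg01 θ x).2
        _ = 1 := by simp
  have hFmeas : Measurable (f ∘ X) := hf_meas.comp hX
  have hFint : Integrable (f ∘ X) P := by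
    refine (integrable_const (1:ℝ)).mono' hFmeas.aestronglyMeasurable (ae_of_all _ fun ω => ?_)
    rw [Real.norm_eq_abs, Function.comp_apply, abs_of_nonneg (hf01 (X ω)).1]
    exact (hf01 (X ω)).2
  have hm1M : MeasurableSpace.comap (f ∘ X) inferInstance
      ≤ MeasurableSpace.comap X inferInstance ⊔ MeasurableSpace.comap A inferInstance := by
    refine le_trans ?_ le_sup_left
    rw [← MeasurableSpace.comap_comp]
    exact MeasurableSpace.comap_mono hf_meas.comap_le
  have hgap := gap_bound P (le_sup_left :
      MeasurableSpace.comap (f ∘ X) inferInstance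
        ≤ MeasurableSpace.comap (f ∘ X) inferInstance ⊔ MeasurableSpace.comap A inferInstance)
    (sup_le hm1M le_sup_right) (sup_le hX.comap_le hA.comap_le)
    Y (f ∘ X) hFint (Measurable.of_comap_le le_rfl).stronglyMeasurable
  rw [← hB] at hgap
  simp only [Function.comp_apply] at hgap
  -- now bound ∫ |B - f∘X|
  have hBint : Integrable B P := hB ▸ integrable_condExp
  have hDint : Integrable (fun ω => B ω - f (X ω)) P := by
    have : Integrable (fun ω => B ω - (f ∘ X) ω) P := hBint.sub hFint
    simpa using this
  set K1 : 𝒜 → ℝ := fun a => ∫ θ, llr (Qstar a) Q θ ∂(Qstar a) with hK1def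
  set K2 : 𝒜 → ℝ := fun a => ∫ θ, llr (Qstar a) (μa a) θ ∂(Qstar a) with hK2def
  have hK10 : ∀ a, 0 ≤ K1 a := fun a => (pinsker_aux _ _ (hfin a).1.1 (hfin a).1.2).1
  have hK20 : ∀ a, 0 ≤ K2 a := fun a => (pinsker_aux _ _ (hfin a).2.1 (hfin a).2.2).1
  set C : 𝒜 → ℝ := fun a => Real.sqrt 2 * Real.sqrt (K1 a) + Real.sqrt 2 * Real.sqrt (K2 a)
    with hCdef
  have hSmeas : ∀ a : 𝒜, MeasurableSet (A ⁻¹' {a}) := fun a => hA (measurableSet_singleton a)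
  have hDa : ∀ a : 𝒜, ∀ᵐ ω ∂(P.restrict (A ⁻¹' {a})), |B ω - f (X ω)| ≤ C a := by
    intro a
    haveI := hQstar a; haveI := hμa a
    filter_upwards [ae_restrict_of_ae (hrep a), ae_restrict_mem (hSmeas a)] with ω hω hmem
    have hBω : ∫ θ, g θ (X ω) ∂(μa a) = B ω := hω hmem
    have hD : |B ω - f (X ω)| = |(∫ θ, g θ (X ω) ∂(μa a)) - ∫ θ, g θ (X ω) ∂Q| := by
      rw [← hBω, hfdef (X ω)]
    rw [hD]
    have h1 := integral_diff_le_pinsker (Qstar a) Q (hfin a).1.1 (hfin a).1.2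
      (fun θ => g θ (X ω)) (hgx_meas (X ω)) (fun θ => hg01 θ (X ω))
    have h2 := integral_diff_le_pinsker (Qstar a) (μa a) (hfin a).2.1 (hfin a).2.2
      (fun θ => g θ (X ω)) (hgx_meas (X ω)) (fun θ => hg01 θ (X ω))
    have htri : |(∫ θ, g θ (X ω) ∂(μa a)) - ∫ θ, g θ (X ω) ∂Q|
        ≤ |(∫ θ, g θ (X ω) ∂(Qstar a)) - ∫ θ, g θ (X ω) ∂(μa a)|
          + |(∫ θ, g θ (X ω) ∂(Qstar a)) - ∫ θ, g θ (X ω) ∂Q| := by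
      have := abs_sub_le (∫ θ, g θ (X ω) ∂(μa a)) (∫ θ, g θ (X ω) ∂(Qstar a))
        (∫ θ, g θ (X ω) ∂Q)
      rw [abs_sub_comm (∫ θ, g θ (X ω) ∂(μa a)) (∫ θ, g θ (X ω) ∂(Qstar a))] at this
      exact this
    rw [hCdef]
    rw [abs_sub_comm] at h2
    calc |(∫ θ, g θ (X ω) ∂(μa a)) - ∫ θ, g θ (X ω) ∂Q|
        ≤ _ + _ := htri
      _ ≤ Real.sqrt 2 * Real.sqrt (K2 a) + Real.sqrt 2 * Real.sqrt (K1 a) := by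
          rw [abs_sub_comm] at h2
          exact add_le_add h2 h1
      _ = Real.sqrt 2 * Real.sqrt (K1 a) + Real.sqrt 2 * Real.sqrt (K2 a) := by ring
  have hpiece : ∀ a : 𝒜, ∫ ω in A ⁻¹' {a}, |B ω - f (X ω)| ∂P ≤ (1 / (n:ℝ)) * C a := by
    intro a
    have hint1 : Integrable (fun ω => |B ω - f (X ω)|) (P.restrict (A ⁻¹' {a})) :=
      hDint.abs.restrict
    have hint2 : Integrable (fun _ω => C a) (P.restrict (A ⁻¹' {a})) := integrable_const _
    have := integral_mono_ae hint1 hint2 (hDa a)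
    refine this.trans ?_
    rw [integral_const]
    rw [measureReal_restrict_apply_univ, measureReal_def, hunif a]
    rw [smul_eq_mul]
    have : ((1:ℝ≥0∞) / n).toReal = 1 / (n:ℝ) := by
      rw [ENNReal.toReal_div]
      simp
    rw [this]
  have hcover : ∫ ω, |B ω - f (X ω)| ∂P = ∑ a : 𝒜, ∫ ω in A ⁻¹' {a}, |B ω - f (X ω)| ∂P := by
    have huniv : (⋃ a ∈ Finset.univ, A ⁻¹' {a} : Set Ω) = Set.univ := by
      ext ω; simp
    rw [← setIntegral_univ, ← huniv]
    refine integral_biUnion_finset Finset.univ (fun a _ => hSmeas a) ?_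
      (fun a _ => hDint.abs.integrableOn)
    intro a _ b _ hab
    refine Set.disjoint_left.mpr fun ω ha hb => hab ?_
    simp only [Set.mem_preimage, Set.mem_singleton_iff] at ha hb
    rw [← ha, ← hb]
  have hDbound : ∫ ω, |B ω - f (X ω)| ∂P ≤ (1 / (n:ℝ)) * ∑ a : 𝒜, C a := by
    rw [hcover, Finset.mul_sum]
    exact Finset.sum_le_sum fun a _ => hpiece a
  -- assemble the real inequality
  set Sreal : ℝ := ∑ a : 𝒜, (Real.sqrt (K1 a) + Real.sqrt (K2 a)) with hSrealdef
  have hCsum : ∑ a : 𝒜, C a = Real.sqrt 2 * Sreal := by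
    rw [hSrealdef, Finset.mul_sum]
    refine Finset.sum_congr rfl fun a _ => ?_
    rw [hCdef]; ring
  have hSreal0 : 0 ≤ Sreal := Finset.sum_nonneg fun a _ => by positivity
  have hreal : ∫ ω, |(P[Y | MeasurableSpace.comap (f ∘ X) inferInstance]) ω -
        (P[Y | MeasurableSpace.comap (f ∘ X) inferInstance ⊔
              MeasurableSpace.comap A inferInstance]) ω| ∂P
      ≤ (2 * Real.sqrt 2 / n) * Sreal := by
    have h2 : ∫ ω, |(P[Y|MeasurableSpace.comap X inferInstance ⊔
        MeasurableSpace.comap A inferInstance]) ω - (f ∘ X) ω| ∂P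
        = ∫ ω, |B ω - f (X ω)| ∂P := by rw [← hB]; rfl
    calc ∫ ω, |(P[Y | MeasurableSpace.comap (f ∘ X) inferInstance]) ω -
        (P[Y | MeasurableSpace.comap (f ∘ X) inferInstance ⊔
              MeasurableSpace.comap A inferInstance]) ω| ∂P
        ≤ 2 * ∫ ω, |B ω - f (X ω)| ∂P := hgap
      _ ≤ 2 * ((1 / (n:ℝ)) * ∑ a : 𝒜, C a) := by linarith [hDbound]
      _ = (2 * Real.sqrt 2 / n) * Sreal := by rw [hCsum]; field_simp
  -- convert to ℝ≥0∞
  have hRHS : (ENNReal.ofReal (2 * Real.sqrt 2) / n) *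
      ∑ a : 𝒜, ((klDiv (Qstar a) Q) ^ (1 / 2 : ℝ) + (klDiv (Qstar a) (μa a)) ^ (1 / 2 : ℝ))
      = ENNReal.ofReal ((2 * Real.sqrt 2 / n) * Sreal) := by
    have hterm : ∀ a : 𝒜, (klDiv (Qstar a) Q) ^ (1 / 2 : ℝ) + (klDiv (Qstar a) (μa a)) ^ (1 / 2 : ℝ)
        = ENNReal.ofReal (Real.sqrt (K1 a) + Real.sqrt (K2 a)) := by
      intro a
      have e1 : klDiv (Qstar a) Q = ENNReal.ofReal (K1 a) := by rw [klDiv, if_pos (hfin a).1]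
      have e2 : klDiv (Qstar a) (μa a) = ENNReal.ofReal (K2 a) := by rw [klDiv, if_pos (hfin a).2]
      rw [e1, e2, ENNReal.ofReal_rpow_of_nonneg (hK10 a) (by norm_num),
        ENNReal.ofReal_rpow_of_nonneg (hK20 a) (by norm_num),
        ← ENNReal.ofReal_add (Real.rpow_nonneg (hK10 a) _) (Real.rpow_nonneg (hK20 a) _),
        ← Real.sqrt_eq_rpow, ← Real.sqrt_eq_rpow]
    have hsum : ∑ a : 𝒜, ((klDiv (Qstar a) Q) ^ (1 / 2 : ℝ) + (klDiv (Qstar a) (μa a)) ^ (1 / 2 : ℝ))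
        = ENNReal.ofReal Sreal := by
      rw [hSrealdef]
      rw [ENNReal.ofReal_sum_of_nonneg (fun a _ => by positivity)]
      exact Finset.sum_congr rfl fun a _ => hterm a
    rw [hsum]
    rw [show (n : ℝ≥0∞) = ENNReal.ofReal (n:ℝ) by rw [ENNReal.ofReal_natCast]]
    rw [← ENNReal.ofReal_div_of_pos hn0, ← ENNReal.ofReal_mul (by positivity)]
  rw [hRHS]
  exact ENNReal.ofReal_le_ofReal hreal
end

section
/- Let 𝒜_0 be a measurable space (hypothesis space), l ∈ ℕ, and for each k ∈ {1,…,l} let A_k be a measurable space, μ_k a probability measure on A_k, and X_1,…,X_l jointly independent random elements with X_k distributed as μ_k. For each k let g_k : 𝒜_0 × A_k → ℝ be jointly measurable with values in [a_k, b_k] for real constants a_k ≤ b_k, and define ζ_k(f) := ∫_{A_k} g_k(f, x) dμ_k(x). Fix a probability measure π on 𝒜_0 and real numbers λ > 0 and δ ∈ (0,1). Then with probability at least 1 − δ over the draw of (X_1,…,X_l), simultaneously for every probability measure ρ on 𝒜_0: ∫_{𝒜_0} Σ_{k=1}^l ζ_k(f) dρ(f) − ∫_{𝒜_0} Σ_{k=1}^l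 g_k(f, X_k) dρ(f) ≤ (1/λ)·( KL(ρ ‖ π) + (λ²/8)·Σ_{k=1}^l (b_k − a_k)² + log(1/δ) ). (Lemma E.1, PAC-Bayes lemma.) -/
open MeasureTheory ProbabilityTheory
open scoped ENNReal NNReal Classical

lemma hoeffding_scalar (p : ℝ) (hp0 : 0 ≤ p) (hp1 : p ≤ 1) (h : ℝ) :
    (1 - p) * Real.exp (-p * h) + p * Real.exp ((1 - p) * h) ≤ Real.exp (h ^ 2 / 8) := by
  set D : ℝ → ℝ := fun x => 1 - p + p * Real.exp x with hDdef
  have hD : ∀ x, 0 < D x := by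
    intro x
    rcases eq_or_lt_of_le hp0 with h0 | h0
    · simp [hDdef, ← h0]
    · have : 0 < p * Real.exp x := mul_pos h0 (Real.exp_pos x)
      have : (0:ℝ) ≤ 1 - p := by linarith
      simp only [hDdef]; linarith
  have hDderiv : ∀ x, HasDerivAt D (p * Real.exp x) x := by
    intro x
    exact ((Real.hasDerivAt_exp x).const_mul p).const_add (1 - p)
  set G : ℝ → ℝ := fun x => x ^ 2 / 8 + p * x - Real.log (D x) with hGdef
  set G1 : ℝ → ℝ := fun x => x / 4 + p - p * Real.exp x / D x with hG1def
  have hGderiv : ∀ x, HasDerivAt G (G1 x) x := by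
    intro x
    have h1 : HasDerivAt (fun x : ℝ => x ^ 2 / 8 + p * x) (x / 4 + p) x := by
      have := ((hasDerivAt_pow 2 x).div_const 8).add ((hasDerivAt_id x).const_mul p)
      exact this.congr_deriv (by ring_nf)
    have h2 : HasDerivAt (fun x => Real.log (D x)) (p * Real.exp x / D x) x :=
      (hDderiv x).log (hD x).ne'
    exact h1.sub h2
  have hG1deriv : ∀ x, HasDerivAt G1 (1 / 4 - p * Real.exp x * (1 - p) / (D x) ^ 2) x := by
    intro x
    have h1 : HasDerivAt (fun x : ℝ => x / 4 + p) (1 / 4) x := by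
      simpa using ((hasDerivAt_id x).div_const 4).add_const p
    have h2 : HasDerivAt (fun x => p * Real.exp x / D x)
        ((p * Real.exp x * D x - p * Real.exp x * (p * Real.exp x)) / (D x) ^ 2) x :=
      ((Real.hasDerivAt_exp x).const_mul p).div (hDderiv x) (hD x).ne'
    have := h1.sub h2
    refine this.congr_deriv ?_
    have hx := hD x
    simp only [hDdef]
    ring
  have hG2nonneg : ∀ x, 0 ≤ 1 / 4 - p * Real.exp x * (1 - p) / (D x) ^ 2 := by
    intro x
    have hx := hD x
    have hu : 0 ≤ p * Real.exp x := mul_nonneg hp0 (Real.exp_pos x).le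
    have hv : (0:ℝ) ≤ 1 - p := by linarith
    have hDx : D x = (1 - p) + p * Real.exp x := rfl
    rw [sub_nonneg, div_le_iff₀ (by positivity)]
    nlinarith [sq_nonneg (p * Real.exp x - (1 - p))]
  have hG1mono : Monotone G1 :=
    monotone_of_deriv_nonneg (fun x => (hG1deriv x).differentiableAt)
      (fun x => by rw [(hG1deriv x).deriv]; exact hG2nonneg x)
  have hG1zero : G1 0 = 0 := by
    simp [hG1def, hDdef]
  have hG0 : G 0 = 0 := by simp [hGdef, hDdef]
  have hGnonneg : ∀ x, 0 ≤ G x := by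
    intro x
    rcases le_total 0 x with hx | hx
    · have hmono : MonotoneOn G (Set.Ici 0) := by
        refine monotoneOn_of_deriv_nonneg (convex_Ici 0)
          (fun y _ => ((hGderiv y).differentiableAt).continuousAt.continuousWithinAt)
          (fun y _ => ((hGderiv y).differentiableAt).differentiableWithinAt) (fun y hy => ?_)
        rw [(hGderiv y).deriv]
        rw [interior_Ici] at hy
        have := hG1mono (le_of_lt hy)
        rwa [hG1zero] at this
      have := hmono (Set.self_mem_Ici) hx hx
      rwa [hG0] at this
    · have hanti : AntitoneOn G (Set.Iic 0) := by
        refine antitoneOn_of_deriv_nonpos (convex_Iic 0)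
          (fun y _ => ((hGderiv y).differentiableAt).continuousAt.continuousWithinAt)
          (fun y _ => ((hGderiv y).differentiableAt).differentiableWithinAt) (fun y hy => ?_)
        rw [(hGderiv y).deriv]
        rw [interior_Iic] at hy
        have := hG1mono (le_of_lt hy)
        rwa [hG1zero] at this
      have := hanti hx (Set.self_mem_Iic) hx
      rwa [hG0] at this
    -- typo guard
  have key : D h ≤ Real.exp (h ^ 2 / 8 + p * h) := by
    have := hGnonneg h
    have hlog : Real.log (D h) ≤ h ^ 2 / 8 + p * h := by
      simp only [hGdef] at this; linarith
    calc D h = Real.exp (Real.log (D h)) := (Real.exp_log (hD h)).symm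
      _ ≤ Real.exp (h ^ 2 / 8 + p * h) := Real.exp_le_exp.mpr hlog
  have : Real.exp (-p * h) * D h ≤ Real.exp (h ^ 2 / 8) := by
    calc Real.exp (-p * h) * D h ≤ Real.exp (-p * h) * Real.exp (h ^ 2 / 8 + p * h) := by
          exact mul_le_mul_of_nonneg_left key (Real.exp_pos _).le
      _ = Real.exp (h ^ 2 / 8) := by rw [← Real.exp_add]; ring_nf
  calc (1 - p) * Real.exp (-p * h) + p * Real.exp ((1 - p) * h)
      = Real.exp (-p * h) * D h := by
        simp only [hDdef]
        rw [mul_add, mul_comm (Real.exp (-p*h)) (p * Real.exp h), mul_assoc, ← Real.exp_add]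
        ring_nf
    _ ≤ Real.exp (h ^ 2 / 8) := this

lemma hoeffding_int {A : Type*} [MeasurableSpace A] (μ : Measure A) [IsProbabilityMeasure μ]
    (g : A → ℝ) (hg : Measurable g) (a b t : ℝ) (hab : a ≤ b)
    (hrange : ∀ x, g x ∈ Set.Icc a b) :
    ∫ x, Real.exp (t * ((∫ y, g y ∂μ) - g x)) ∂μ ≤ Real.exp (t ^ 2 * (b - a) ^ 2 / 8) := by
  have hgint : Integrable g μ := by
    refine Integrable.mono' (integrable_const (max |a| |b|)) hg.aestronglyMeasurable
      (ae_of_all _ fun x => ?_)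
    rcases hrange x with ⟨h1, h2⟩
    rw [Real.norm_eq_abs, abs_le]
    constructor
    · calc -(max |a| |b|) ≤ -|a| := by simp
        _ ≤ a := neg_abs_le a
        _ ≤ g x := h1
    · calc g x ≤ b := h2
        _ ≤ |b| := le_abs_self b
        _ ≤ max |a| |b| := le_max_right _ _
  set m := ∫ y, g y ∂μ with hm
  have hma : a ≤ m := by
    calc a = ∫ _, a ∂μ := by simp
      _ ≤ m := integral_mono (integrable_const a) hgint (fun x => (hrange x).1)
  have hmb : m ≤ b := by
    calc m ≤ ∫ _, b ∂μ := integral_mono hgint (integrable_const b) (fun x => (hrange x).2)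
      _ = b := by simp
  rcases eq_or_lt_of_le hab with heq | hlt
  · have hga : ∀ x, g x = a := fun x => le_antisymm (heq ▸ (hrange x).2) (hrange x).1
    have hmeq : m = a := by rw [hm]; simp [funext hga]
    simp [funext hga, hmeq, ← heq]
  · have hba : (0:ℝ) < b - a := by linarith
    set p := (m - a) / (b - a) with hp
    have hp0 : 0 ≤ p := div_nonneg (by linarith) hba.le
    have hp1 : p ≤ 1 := by rw [hp, div_le_one hba]; linarith
    set E1 := Real.exp (t * (m - a)) with hE1
    set E2 := Real.exp (t * (m - b)) with hE2
    have hpt : ∀ x, Real.exp (t * (m - g x)) ≤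
        (b - g x) / (b - a) * E1 + (g x - a) / (b - a) * E2 := by
      intro x
      have hw1 : 0 ≤ (b - g x) / (b - a) := div_nonneg (by linarith [(hrange x).2]) hba.le
      have hw2 : 0 ≤ (g x - a) / (b - a) := div_nonneg (by linarith [(hrange x).1]) hba.le
      have hsum : (b - g x) / (b - a) + (g x - a) / (b - a) = 1 := by
        field_simp
        ring
      have := convexOn_exp.2 (Set.mem_univ (t * (m - a))) (Set.mem_univ (t * (m - b)))
        hw1 hw2 hsum
      simp only [smul_eq_mul] at this
      have harg : (b - g x) / (b - a) * (t * (m - a)) + (g x - a) / (b - a) * (t * (m - b))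
          = t * (m - g x) := by
        field_simp
        ring
      rwa [harg] at this
    have hint1 : Integrable (fun x => Real.exp (t * (m - g x))) μ := by
      refine Integrable.mono' (integrable_const (Real.exp (|t| * (b - a))))
        ((hg.const_sub m).const_mul t).exp.aestronglyMeasurable (ae_of_all _ fun x => ?_)
      rw [Real.norm_eq_abs, abs_of_pos (Real.exp_pos _), Real.exp_le_exp]
      calc t * (m - g x) ≤ |t * (m - g x)| := le_abs_self _
        _ = |t| * |m - g x| := abs_mul _ _
        _ ≤ |t| * (b - a) := by
            refine mul_le_mul_of_nonneg_left ?_ (abs_nonneg t)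
            rw [abs_le]
            constructor <;> [linarith [(hrange x).2]; linarith [(hrange x).1]]
    have i1int : Integrable (fun x => (b - g x) / (b - a) * E1) μ := by
      refine ((((integrable_const b).sub hgint).div_const (b - a)).mul_const E1).congr
        (ae_of_all _ fun x => ?_)
      simp [Pi.sub_apply]
    have i2int : Integrable (fun x => (g x - a) / (b - a) * E2) μ := by
      refine (((hgint.sub (integrable_const a)).div_const (b - a)).mul_const E2).congr
        (ae_of_all _ fun x => ?_)
      simp [Pi.sub_apply]
    have hint2 : Integrable (fun x => (b - g x) / (b - a) * E1 + (g x - a) / (b - a) * E2) μ :=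
      i1int.add i2int
    have i1 : ∫ x, (b - g x) / (b - a) * E1 ∂μ = (1 - p) * E1 := by
      rw [integral_mul_const]
      congr 1
      rw [integral_div, integral_sub (integrable_const b) hgint]
      simp only [integral_const, probReal_univ, ENNReal.toReal_one, one_smul]
      rw [hp, ← hm]
      field_simp
      ring
    have i2 : ∫ x, (g x - a) / (b - a) * E2 ∂μ = p * E2 := by
      rw [integral_mul_const]
      congr 1
      rw [integral_div, integral_sub hgint (integrable_const a)]
      simp only [integral_const, probReal_univ, ENNReal.toReal_one, one_smul]
      rw [hp, ← hm]
    have hstep : ∫ x, Real.exp (t * (m - g x)) ∂μ ≤ (1 - p) * E1 + p * E2 := by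
      calc ∫ x, Real.exp (t * (m - g x)) ∂μ
          ≤ ∫ x, ((b - g x) / (b - a) * E1 + (g x - a) / (b - a) * E2) ∂μ :=
            integral_mono hint1 hint2 hpt
        _ = (1 - p) * E1 + p * E2 := by rw [integral_add i1int i2int, i1, i2]
    set h := -t * (b - a) with hh
    have hE1' : E1 = Real.exp (-p * h) := by
      rw [hE1, hh, hp]
      congr 1
      field_simp
    have hE2' : E2 = Real.exp ((1 - p) * h) := by
      rw [hE2, hh, hp]
      congr 1
      field_simp
      ring
    have hfin := hoeffding_scalar p hp0 hp1 h
    rw [← hE1', ← hE2'] at hfin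
    have hhsq : h ^ 2 / 8 = t ^ 2 * (b - a) ^ 2 / 8 := by rw [hh]; ring
    rw [hhsq] at hfin
    exact hstep.trans hfin

lemma change_of_measure {Θ : Type*} [MeasurableSpace Θ] (ρ pr : Measure Θ)
    [IsProbabilityMeasure ρ] [IsProbabilityMeasure pr] (hac : ρ ≪ pr)
    (hint : Integrable (MeasureTheory.llr ρ pr) ρ)
    (h : Θ → ℝ) (hh : Measurable h) (C : ℝ) (hC : ∀ x, |h x| ≤ C) :
    ∫ x, h x ∂ρ ≤ (∫ x, MeasureTheory.llr ρ pr x ∂ρ) + Real.log (∫ x, Real.exp (h x) ∂pr) := by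
  have hhint : ∀ (ν : Measure Θ) [IsProbabilityMeasure ν], Integrable h ν := by
    intro ν _
    exact Integrable.mono' (integrable_const C) hh.aestronglyMeasurable
      (ae_of_all _ fun x => by rw [Real.norm_eq_abs]; exact hC x)
  have hexpint : Integrable (fun x => Real.exp (h x)) pr := by
    refine Integrable.mono' (integrable_const (Real.exp C)) hh.exp.aestronglyMeasurable
      (ae_of_all _ fun x => ?_)
    rw [Real.norm_eq_abs, abs_of_pos (Real.exp_pos _), Real.exp_le_exp]
    exact (abs_le.mp (hC x)).2
  set c := ∫ x, Real.exp (h x) ∂pr with hc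
  have hcpos : 0 < c := by
    have : Real.exp (-C) = ∫ _, Real.exp (-C) ∂pr := by simp
    have hle : Real.exp (-C) ≤ c := by
      rw [this, hc]
      exact integral_mono (integrable_const _) hexpint
        (fun x => Real.exp_le_exp.mpr (by linarith [(abs_le.mp (hC x)).1]))
    exact lt_of_lt_of_le (Real.exp_pos _) hle
  set u : Θ → ℝ := fun x => Real.exp (h x - MeasureTheory.llr ρ pr x) with hu
  have humeas : Measurable u := (hh.sub (measurable_llr ρ pr)).exp
  have hupos : ∀ x, 0 < u x := fun x => Real.exp_pos _
  have key : ∫⁻ x, ENNReal.ofReal (u x) ∂ρ ≤ ENNReal.ofReal c := by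
    have hwd : pr.withDensity (ρ.rnDeriv pr) = ρ := Measure.withDensity_rnDeriv_eq ρ pr hac
    rw [← hwd, lintegral_withDensity_eq_lintegral_mul _ (Measure.measurable_rnDeriv ρ pr)
      (humeas.ennreal_ofReal)]
    have hpt : ∀ᵐ x ∂pr, (ρ.rnDeriv pr * fun x => ENNReal.ofReal (u x)) x
        ≤ ENNReal.ofReal (Real.exp (h x)) := by
      filter_upwards [Measure.rnDeriv_lt_top ρ pr] with x hlt
      simp only [Pi.mul_apply]
      rcases eq_or_ne (ρ.rnDeriv pr x) 0 with h0 | h0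
      · simp [h0]
      · have hrt : 0 < (ρ.rnDeriv pr x).toReal := ENNReal.toReal_pos h0 hlt.ne
        have hux : u x = Real.exp (h x) / (ρ.rnDeriv pr x).toReal := by
          rw [hu]
          simp only
          rw [MeasureTheory.llr_def, Real.exp_sub, Real.exp_log hrt]
        calc ρ.rnDeriv pr x * ENNReal.ofReal (u x)
            = ENNReal.ofReal ((ρ.rnDeriv pr x).toReal) * ENNReal.ofReal (u x) := by
              rw [ENNReal.ofReal_toReal hlt.ne]
          _ = ENNReal.ofReal ((ρ.rnDeriv pr x).toReal * u x) :=
              (ENNReal.ofReal_mul hrt.le).symm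
          _ = ENNReal.ofReal (Real.exp (h x)) := by
              rw [hux, mul_div_cancel₀ _ hrt.ne']
          _ ≤ ENNReal.ofReal (Real.exp (h x)) := le_rfl
    calc ∫⁻ x, (ρ.rnDeriv pr * fun x => ENNReal.ofReal (u x)) x ∂pr
        ≤ ∫⁻ x, ENNReal.ofReal (Real.exp (h x)) ∂pr := lintegral_mono_ae hpt
      _ = ENNReal.ofReal c := by
          rw [hc, ← ofReal_integral_eq_lintegral_ofReal hexpint
            (ae_of_all _ fun x => (Real.exp_pos _).le)]
  have huint : Integrable u ρ := by
    refine ⟨humeas.aestronglyMeasurable, ?_⟩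
    rw [hasFiniteIntegral_iff_ofReal (ae_of_all _ fun x => (hupos x).le)]
    exact lt_of_le_of_lt key ENNReal.ofReal_lt_top
  have huc : ∫ x, u x ∂ρ ≤ c := by
    rw [integral_eq_lintegral_of_nonneg_ae (ae_of_all _ fun x => (hupos x).le)
      humeas.aestronglyMeasurable]
    calc (∫⁻ x, ENNReal.ofReal (u x) ∂ρ).toReal ≤ (ENNReal.ofReal c).toReal :=
          ENNReal.toReal_mono ENNReal.ofReal_ne_top key
      _ = c := ENNReal.toReal_ofReal hcpos.le
  have hpt2 : ∀ x, h x - MeasureTheory.llr ρ pr x ≤ u x / c - 1 + Real.log c := by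
    intro x
    have h1 : Real.log (u x / c) ≤ u x / c - 1 :=
      Real.log_le_sub_one_of_pos (div_pos (hupos x) hcpos)
    have h2 : Real.log (u x / c) = Real.log (u x) - Real.log c :=
      Real.log_div (hupos x).ne' hcpos.ne'
    have h3 : Real.log (u x) = h x - MeasureTheory.llr ρ pr x := Real.log_exp _
    linarith
  have hmain : ∫ x, (h x - MeasureTheory.llr ρ pr x) ∂ρ ≤ Real.log c := by
    have hRint : Integrable (fun x => u x / c - 1 + Real.log c) ρ :=
      ((huint.div_const c).sub (integrable_const 1)).add (integrable_const (Real.log c))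
    have i3 : Integrable (fun x => u x / c - 1) ρ := (huint.div_const c).sub (integrable_const 1)
    have i4 : Integrable (fun x => u x / c) ρ := huint.div_const c
    have hR : ∫ x, (u x / c - 1 + Real.log c) ∂ρ = (∫ x, u x ∂ρ) / c - 1 + Real.log c := by
      rw [integral_add i3 (integrable_const (Real.log c)),
        integral_sub i4 (integrable_const 1), integral_div]
      simp
    have hLint : Integrable (fun x => h x - llr ρ pr x) ρ := (hhint ρ).sub hint
    have := integral_mono hLint hRint hpt2
    rw [hR] at this
    have hdiv : (∫ x, u x ∂ρ) / c ≤ 1 := by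
      rw [div_le_one hcpos]; exact huc
    linarith
  rw [integral_sub (hhint ρ) hint] at hmain
  linarith

/-- **Lemma E.1 (PAC-Bayes lemma).** With probability at least `1 − δ` over the draw of the
independent samples `(X_1, …, X_l)`, simultaneously for every probability measure `ρ`:
`E_{f∼ρ} Σ_k ζ_k(f) − E_{f∼ρ} Σ_k g_k(f, X_k)
  ≤ (1/λ)·(KL(ρ‖π) + (λ²/8)·Σ_k (b_k − a_k)² + log(1/δ))`. -/
theorem pac_bayes_lemma
    {Ω 𝒜₀ : Type*} [MeasurableSpace Ω] [MeasurableSpace 𝒜₀]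
    (P : Measure Ω) [IsProbabilityMeasure P]
    (l : ℕ) (Atype : Fin l → Type*) [∀ k, MeasurableSpace (Atype k)]
    (μ : ∀ k, Measure (Atype k)) (hμ : ∀ k, IsProbabilityMeasure (μ k))
    (Xs : ∀ k, Ω → Atype k) (hXs : ∀ k, Measurable (Xs k))
    (hindep : iIndepFun Xs P)
    (hdist : ∀ k, P.map (Xs k) = μ k)
    (g : ∀ k, 𝒜₀ → Atype k → ℝ) (hg : ∀ k, Measurable (Function.uncurry (g k)))
    (a b : Fin l → ℝ) (hab : ∀ k, a k ≤ b k)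
    (hrange : ∀ k fh x, g k fh x ∈ Set.Icc (a k) (b k))
    (π : Measure 𝒜₀) [IsProbabilityMeasure π]
    (lam δ : ℝ) (hlam : 0 < lam) (hδ : δ ∈ Set.Ioo (0 : ℝ) 1) :
    ∃ E : Set Ω, MeasurableSet E ∧ 1 - ENNReal.ofReal δ ≤ P E ∧
      ∀ ω ∈ E, ∀ ρ : Measure 𝒜₀, IsProbabilityMeasure ρ →
        ENNReal.ofReal ((∫ fh, ∑ k : Fin l, (∫ x, g k fh x ∂(μ k)) ∂ρ) -
            ∫ fh, ∑ k : Fin l, g k fh (Xs k ω) ∂ρ)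
          ≤ ENNReal.ofReal (1 / lam) *
              (klDiv ρ π +
                ENNReal.ofReal (lam ^ 2 / 8 * ∑ k : Fin l, (b k - a k) ^ 2 + Real.log (1 / δ))) := by
  classical
  haveI : ∀ k, IsProbabilityMeasure (μ k) := hμ
  obtain ⟨hδ0, hδ1⟩ := hδ
  -- the mean functions ζ
  set ζ : Fin l → 𝒜₀ → ℝ := fun k f => ∫ x, g k f x ∂(μ k) with hζdef
  have hgfm : ∀ k (f : 𝒜₀), Measurable (fun x => g k f x) := fun k f =>
    (hg k).comp measurable_prodMk_left
  have hζm : ∀ k, Measurable (ζ k) := fun k =>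
    ((hg k).stronglyMeasurable.integral_prod_right').measurable
  have hgint : ∀ k f, Integrable (fun x => g k f x) (μ k) := by
    intro k f
    refine Integrable.mono' (integrable_const (max |a k| |b k|))
      (hgfm k f).aestronglyMeasurable (ae_of_all _ fun x => ?_)
    rw [Real.norm_eq_abs, abs_le]
    have h1 := (hrange k f x).1; have h2 := (hrange k f x).2
    constructor
    · calc -(max |a k| |b k|) ≤ -|a k| := by simp
        _ ≤ a k := neg_abs_le _
        _ ≤ g k f x := h1
    · calc g k f x ≤ b k := h2
        _ ≤ |b k| := le_abs_self _
        _ ≤ max |a k| |b k| := le_max_right _ _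
  have hζrange : ∀ k f, ζ k f ∈ Set.Icc (a k) (b k) := by
    intro k f
    constructor
    · calc a k = ∫ _, a k ∂(μ k) := by simp
        _ ≤ ζ k f := integral_mono (integrable_const _) (hgint k f) (fun x => (hrange k f x).1)
    · calc ζ k f ≤ ∫ _, b k ∂(μ k) :=
          integral_mono (hgint k f) (integrable_const _) (fun x => (hrange k f x).2)
        _ = b k := by simp
  -- global bound M on the exponent
  set M : ℝ := lam * ∑ k : Fin l, (b k - a k) with hMdef
  have hM0 : 0 ≤ M := mul_nonneg hlam.le (Finset.sum_nonneg fun k _ => by linarith [hab k])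
  set H : Ω → 𝒜₀ → ℝ := fun ω f => lam * ∑ k : Fin l, (ζ k f - g k f (Xs k ω)) with hHdef
  have hHbound : ∀ ω f, |H ω f| ≤ M := by
    intro ω f
    rw [hHdef]
    simp only [abs_mul, abs_of_pos hlam, hMdef]
    refine mul_le_mul_of_nonneg_left ?_ hlam.le
    calc |∑ k : Fin l, (ζ k f - g k f (Xs k ω))| ≤ ∑ k : Fin l, |ζ k f - g k f (Xs k ω)| :=
        Finset.abs_sum_le_sum_abs _ _
      _ ≤ ∑ k : Fin l, (b k - a k) := by
          refine Finset.sum_le_sum fun k _ => ?_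
          rw [abs_le]
          have h1 := (hζrange k f).1; have h2 := (hζrange k f).2
          have h3 := (hrange k f (Xs k ω)).1; have h4 := (hrange k f (Xs k ω)).2
          constructor <;> linarith
  have hHm : ∀ ω, Measurable (H ω) := by
    intro ω
    apply Measurable.const_mul
    exact Finset.measurable_sum _ fun k _ => (hζm k).sub ((hg k).comp
      (measurable_id.prodMk measurable_const))
  -- joint measurability
  have hJm : Measurable (fun q : Ω × 𝒜₀ => Real.exp (H q.1 q.2)) := by
    apply Measurable.exp
    apply Measurable.const_mul
    refine Finset.measurable_sum _ fun k _ => Measurable.sub ?_ ?_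
    · exact (hζm k).comp measurable_snd
    · exact (hg k).comp (measurable_snd.prodMk ((hXs k).comp measurable_fst))
  -- the partition function F
  set F : Ω → ℝ := fun ω => ∫ f, Real.exp (H ω f) ∂π with hFdef
  have hexpint : ∀ ω, Integrable (fun f => Real.exp (H ω f)) π := by
    intro ω
    refine Integrable.mono' (integrable_const (Real.exp M))
      ((hHm ω).exp).aestronglyMeasurable (ae_of_all _ fun f => ?_)
    rw [Real.norm_eq_abs, abs_of_pos (Real.exp_pos _), Real.exp_le_exp]
    exact (abs_le.mp (hHbound ω f)).2
  have hFm : Measurable F := by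
    have : StronglyMeasurable (fun ω => ∫ f, Real.exp (H ω f) ∂π) :=
      hJm.stronglyMeasurable.integral_prod_right'
    exact this.measurable
  have hFpos : ∀ ω, 0 < F ω := by
    intro ω
    have hle : Real.exp (-M) ≤ F ω := by
      have : Real.exp (-M) = ∫ (_ : 𝒜₀), Real.exp (-M) ∂π := by simp
      rw [this]
      exact integral_mono (integrable_const _) (hexpint ω)
        (fun f => Real.exp_le_exp.mpr (by linarith [(abs_le.mp (hHbound ω f)).1]))
    exact lt_of_lt_of_le (Real.exp_pos _) hle
  have hFint : Integrable F P := by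
    refine Integrable.mono' (integrable_const (Real.exp M)) hFm.aestronglyMeasurable
      (ae_of_all _ fun ω => ?_)
    rw [Real.norm_eq_abs, abs_of_pos (hFpos ω)]
    calc F ω ≤ ∫ (_ : 𝒜₀), Real.exp M ∂π :=
        integral_mono (hexpint ω) (integrable_const _)
          (fun f => Real.exp_le_exp.mpr (abs_le.mp (hHbound ω f)).2)
      _ = Real.exp M := by simp
  -- the constant C
  set S : ℝ := ∑ k : Fin l, (b k - a k) ^ 2 with hSdef
  set C : ℝ := Real.exp (lam ^ 2 * S / 8) with hCdef
  have hCpos : 0 < C := Real.exp_pos _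
  -- expectation bound : ∫ F dP ≤ C
  have hEF : ∫ ω, F ω ∂P ≤ C := by
    have hJint : Integrable (fun q : Ω × 𝒜₀ => Real.exp (H q.1 q.2)) (P.prod π) := by
      refine Integrable.mono' (integrable_const (Real.exp M)) hJm.aestronglyMeasurable
        (ae_of_all _ fun q => ?_)
      rw [Real.norm_eq_abs, abs_of_pos (Real.exp_pos _), Real.exp_le_exp]
      exact (abs_le.mp (hHbound q.1 q.2)).2
    have hswap : ∫ ω, F ω ∂P = ∫ f, ∫ ω, Real.exp (H ω f) ∂P ∂π := by
      exact integral_integral_swap hJint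
    rw [hswap]
    -- inner bound for fixed f
    have hinner : ∀ f : 𝒜₀, ∫ ω, Real.exp (H ω f) ∂P ≤ C := by
      intro f
      set Y : Fin l → Ω → ℝ := fun k ω => ζ k f - g k f (Xs k ω) with hYdef
      have hYm : ∀ k, Measurable (Y k) := fun k =>
        (((hg k).comp measurable_prodMk_left).comp (hXs k)).const_sub _
      have hYindep : iIndepFun Y P := by
        have := hindep.comp (fun k x => ζ k f - g k f x)
          (fun k => ((hg k).comp measurable_prodMk_left).const_sub _)
        exact this
      have hHY : ∀ ω, H ω f = lam * (∑ k : Fin l, Y k) ω := by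
        intro ω
        rw [hHdef, hYdef]
        simp [Finset.sum_apply]
      have hmgf : ∫ ω, Real.exp (H ω f) ∂P = mgf (∑ k : Fin l, Y k) P lam := by
        rw [mgf]
        congr 1
        ext ω
        rw [hHY ω]
      rw [hmgf, iIndepFun.mgf_sum hYindep hYm Finset.univ]
      have hterm : ∀ k : Fin l, mgf (Y k) P lam ≤ Real.exp (lam ^ 2 * (b k - a k) ^ 2 / 8) := by
        intro k
        have hmap : mgf (Y k) P lam = ∫ x, Real.exp (lam * (ζ k f - g k f x)) ∂(μ k) := by
          rw [← hdist k, mgf, integral_map (hXs k).aemeasurable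
            (((hgfm k f).const_sub _).const_mul lam).exp.aestronglyMeasurable]
        rw [hmap]
        exact hoeffding_int (μ k) (fun x => g k f x) (hgfm k f) (a k) (b k) lam (hab k)
          (hrange k f)
      calc ∏ k : Fin l, mgf (Y k) P lam
          ≤ ∏ k : Fin l, Real.exp (lam ^ 2 * (b k - a k) ^ 2 / 8) :=
            Finset.prod_le_prod (fun k _ => mgf_nonneg) (fun k _ => hterm k)
        _ = C := by
            rw [← Real.exp_sum, hCdef, hSdef]
            congr 1
            rw [Finset.mul_sum, Finset.sum_div]
    have hinnerint : Integrable (fun f => ∫ ω, Real.exp (H ω f) ∂P) π :=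
      hJint.integral_prod_right
    calc ∫ f, ∫ ω, Real.exp (H ω f) ∂P ∂π ≤ ∫ (_ : 𝒜₀), C ∂π :=
        integral_mono hinnerint (integrable_const _) hinner
      _ = C := by simp
  -- Markov's inequality
  set ε : ℝ := C / δ with hεdef
  have hεpos : 0 < ε := div_pos hCpos hδ0
  refine ⟨{ω | F ω < ε}, (measurableSet_lt hFm measurable_const), ?_, ?_⟩
  · -- probability bound
    have hcompl : {ω | F ω < ε}ᶜ = {ω | ε ≤ F ω} := by
      ext ω; simp [not_lt]
    have hmarkov : ε * (P {ω | ε ≤ F ω}).toReal ≤ C := by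
      calc ε * (P {ω | ε ≤ F ω}).toReal ≤ ∫ ω, F ω ∂P :=
          mul_meas_ge_le_integral_of_nonneg (ae_of_all _ fun ω => (hFpos ω).le) hFint ε
        _ ≤ C := hEF
    have htail : (P {ω | ε ≤ F ω}).toReal ≤ δ := by
      have h2 : (P {ω | ε ≤ F ω}).toReal ≤ C / ε :=
        (le_div_iff₀ hεpos).mpr (by linarith [hmarkov])
      calc (P {ω | ε ≤ F ω}).toReal ≤ C / ε := h2
        _ = δ := by
          rw [hεdef]
          field_simp
    have htail' : P {ω | ε ≤ F ω} ≤ ENNReal.ofReal δ := by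
      rw [← ENNReal.ofReal_toReal (measure_ne_top P _)]
      exact ENNReal.ofReal_le_ofReal htail
    rw [tsub_le_iff_right]
    have hone : (1 : ℝ≥0∞) = P {ω | F ω < ε} + P {ω | F ω < ε}ᶜ := by
      rw [measure_add_measure_compl ((measurableSet_lt hFm measurable_const)), measure_univ]
    rw [hone]
    rw [hcompl]
    exact add_le_add_right htail' _
  · -- main bound on the event
    intro ω hω ρ hρ
    by_cases hcond : ρ ≪ π ∧ Integrable (MeasureTheory.llr ρ π) ρ
    · obtain ⟨hac, hllr⟩ := hcond
      have hkl : klDiv ρ π = ENNReal.ofReal (∫ θ, MeasureTheory.llr ρ π θ ∂ρ) := by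
        rw [klDiv, if_pos ⟨hac, hllr⟩]
      set KLr : ℝ := ∫ θ, MeasureTheory.llr ρ π θ ∂ρ with hKLr
      -- change of measure
      have hcm : ∫ f, H ω f ∂ρ ≤ KLr + Real.log (F ω) := by
        have := change_of_measure ρ π hac hllr (H ω) (hHm ω) M (hHbound ω)
        exact this
      -- bound log F ω
      have hFω : F ω < ε := hω
      have hlogF : Real.log (F ω) ≤ lam ^ 2 * S / 8 + Real.log (1 / δ) := by
        calc Real.log (F ω) ≤ Real.log ε := Real.log_le_log (hFpos ω) hFω.le
          _ = Real.log C + Real.log (1 / δ) := by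
              rw [hεdef, div_eq_mul_inv, Real.log_mul hCpos.ne' (by positivity), one_div,
                Real.log_inv]
          _ = lam ^ 2 * S / 8 + Real.log (1 / δ) := by rw [hCdef, Real.log_exp]
      -- integrability over ρ
      have hζsumint : Integrable (fun f => ∑ k : Fin l, ζ k f) ρ := by
        apply integrable_finset_sum
        intro k _
        refine Integrable.mono' (integrable_const (max |a k| |b k|))
          (hζm k).aestronglyMeasurable (ae_of_all _ fun f => ?_)
        rw [Real.norm_eq_abs, abs_le]
        have h1 := (hζrange k f).1; have h2 := (hζrange k f).2
        constructor
        · calc -(max |a k| |b k|) ≤ -|a k| := by simp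
            _ ≤ a k := neg_abs_le _
            _ ≤ ζ k f := h1
        · calc ζ k f ≤ b k := h2
            _ ≤ |b k| := le_abs_self _
            _ ≤ max |a k| |b k| := le_max_right _ _
      have hgsumint : Integrable (fun f => ∑ k : Fin l, g k f (Xs k ω)) ρ := by
        apply integrable_finset_sum
        intro k _
        refine Integrable.mono' (integrable_const (max |a k| |b k|))
          ((hg k).comp (measurable_id.prodMk measurable_const)).aestronglyMeasurable
          (ae_of_all _ fun f => ?_)
        rw [Real.norm_eq_abs, abs_le]
        have h1 := (hrange k f (Xs k ω)).1; have h2 := (hrange k f (Xs k ω)).2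
        constructor
        · calc -(max |a k| |b k|) ≤ -|a k| := by simp
            _ ≤ a k := neg_abs_le _
            _ ≤ g k f (Xs k ω) := h1
        · calc g k f (Xs k ω) ≤ b k := h2
            _ ≤ |b k| := le_abs_self _
            _ ≤ max |a k| |b k| := le_max_right _ _
      -- the real-number inequality
      set D : ℝ := (∫ fh, ∑ k : Fin l, ζ k fh ∂ρ) - ∫ fh, ∑ k : Fin l, g k fh (Xs k ω) ∂ρ
        with hDdef
      have hHint : ∫ f, H ω f ∂ρ = lam * D := by
        rw [hDdef, hHdef]
        rw [integral_const_mul]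
        congr 1
        rw [← integral_sub hζsumint hgsumint]
        congr 1
        ext f
        rw [Finset.sum_sub_distrib]
      have hDle : lam * D ≤ KLr + (lam ^ 2 * S / 8 + Real.log (1 / δ)) := by
        have h1 : ∫ f, H ω f ∂ρ ≤ KLr + Real.log (F ω) := hcm
        rw [hHint] at h1
        exact h1.trans (add_le_add_right hlogF KLr)
      have hDle' : D ≤ (1 / lam) * (KLr + (lam ^ 2 / 8 * S + Real.log (1 / δ))) := by
        rw [← sub_nonneg] at hDle ⊢
        have heq : (1 / lam) * (KLr + (lam ^ 2 / 8 * S + Real.log (1 / δ))) - D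
            = (1 / lam) * ((KLr + (lam ^ 2 * S / 8 + Real.log (1 / δ))) - lam * D) := by
          field_simp
        rw [heq]
        exact mul_nonneg (by positivity) hDle
      -- transfer to ENNReal
      calc ENNReal.ofReal D
          ≤ ENNReal.ofReal ((1 / lam) * (KLr + (lam ^ 2 / 8 * S + Real.log (1 / δ)))) :=
            ENNReal.ofReal_le_ofReal hDle'
        _ = ENNReal.ofReal (1 / lam) * ENNReal.ofReal (KLr + (lam ^ 2 / 8 * S + Real.log (1 / δ))) :=
            ENNReal.ofReal_mul (by positivity)
        _ ≤ ENNReal.ofReal (1 / lam) *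
            (ENNReal.ofReal KLr + ENNReal.ofReal (lam ^ 2 / 8 * S + Real.log (1 / δ))) :=
            mul_le_mul_right ENNReal.ofReal_add_le _
        _ = ENNReal.ofReal (1 / lam) *
            (klDiv ρ π + ENNReal.ofReal (lam ^ 2 / 8 * S + Real.log (1 / δ))) := by
            rw [hkl]
    · have hkl : klDiv ρ π = ∞ := by
        rw [klDiv, if_neg hcond]
      rw [hkl]
      have htop : (⊤ : ℝ≥0∞) + ENNReal.ofReal (lam ^ 2 / 8 * S + Real.log (1 / δ)) = ⊤ := by
        simp
      rw [htop, ENNReal.mul_top]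
      · exact le_top
      · simp only [ne_eq, ENNReal.ofReal_eq_zero, not_le]
        positivity
end

section
/- For every measurable predictor f : 𝒳 → [0,1], E[ | E[Y | σ(f∘X, A)] − B | ] ≤ 2·E[ |f(X) − B| ], where B = E[Y | σ(X,A)] is the A-group Bayes predictor and σ(f∘X, A) is the σ-algebra generated jointly by f∘X and A. (Key inequality in the proof of Theorem 1, using that E[Y | σ(B,A)] = B almost surely.) -/
open MeasureTheory ProbabilityTheory
open scoped ENNReal

/-- **Key inequality in the proof of Theorem 1.** For every measurable predictor
`f : 𝒳 → [0,1]`, `E[|E[Y | σ(f∘X, A)] − B|] ≤ 2·E[|f(X) − B|]`, where `B = E[Y | σ(X,A)]`. -/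
theorem expected_dist_condExp_joint_to_bayes_le
    {Ω 𝒳 𝒜 : Type*} [MeasurableSpace Ω] [MeasurableSpace 𝒳] [MeasurableSpace 𝒜]
    (P : Measure Ω) [IsProbabilityMeasure P]
    (X : Ω → 𝒳) (A : Ω → 𝒜) (Y : Ω → ℝ)
    (hX : Measurable X) (hA : Measurable A) (hY : Measurable Y)
    (hY01 : ∀ ω, Y ω = 0 ∨ Y ω = 1)
    (f : 𝒳 → ℝ) (hf : Measurable f) (hf01 : ∀ x, f x ∈ Set.Icc (0 : ℝ) 1)
    (B : Ω → ℝ)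
    (hB : B = P[Y | MeasurableSpace.comap X inferInstance ⊔ MeasurableSpace.comap A inferInstance]) :
    ∫ ω, |(P[Y | MeasurableSpace.comap (f ∘ X) inferInstance ⊔
              MeasurableSpace.comap A inferInstance]) ω - B ω| ∂P
      ≤ 2 * ∫ ω, |f (X ω) - B ω| ∂P := by
  set m₁ : MeasurableSpace Ω :=
    MeasurableSpace.comap X inferInstance ⊔ MeasurableSpace.comap A inferInstance with hm₁def
  set m₂ : MeasurableSpace Ω :=
    MeasurableSpace.comap (f ∘ X) inferInstance ⊔ MeasurableSpace.comap A inferInstance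
  have hm₁ : m₁ ≤ _ := sup_le hX.comap_le hA.comap_le
  have h21 : m₂ ≤ m₁ := by
    refine sup_le (le_trans ?_ le_sup_left) le_sup_right
    rw [← MeasurableSpace.comap_comp]
    exact MeasurableSpace.comap_mono hf.comap_le
  have hm₂ : m₂ ≤ _ := h21.trans hm₁
  -- integrability facts
  have hYint : Integrable Y P := by
    refine (integrable_const (1 : ℝ)).mono' hY.aestronglyMeasurable (ae_of_all _ fun ω => ?_)
    rcases hY01 ω with h | h <;> simp [h]
  have hBint : Integrable B P := hB ▸ integrable_condExp
  have hfXint : Integrable (fun ω => f (X ω)) P := by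
    refine (integrable_const (1 : ℝ)).mono' (hf.comp hX).aestronglyMeasurable
      (ae_of_all _ fun ω => ?_)
    have := hf01 (X ω)
    rw [Real.norm_eq_abs, abs_le]
    constructor <;> linarith [this.1, this.2]
  -- tower property: P[Y|m₂] = P[B|m₂] a.e.
  have htower : P[Y | m₂] =ᵐ[P] P[B | m₂] := by
    rw [hB]
    exact (condExp_condExp_of_le (μ := P) (f := Y) h21 hm₁).symm
  -- f ∘ X is m₂-measurable so P[f∘X|m₂] = f∘X a.e.
  have hfXmeas : StronglyMeasurable[m₂] (fun ω => f (X ω)) := by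
    refine Measurable.stronglyMeasurable ?_
    have : Measurable[MeasurableSpace.comap (f ∘ X) inferInstance] (f ∘ X) :=
      Measurable.of_comap_le le_rfl
    exact this.mono le_sup_left le_rfl
  have hfXcond : P[(fun ω => f (X ω)) | m₂] = fun ω => f (X ω) :=
    condExp_of_stronglyMeasurable (μ := P) hm₂ hfXmeas hfXint
  have hsub : P[(fun ω => B ω - f (X ω)) | m₂]
      =ᵐ[P] P[B | m₂] - P[(fun ω => f (X ω)) | m₂] := condExp_sub hBint hfXint m₂
  -- pointwise a.e. bound
  have hptwise : ∀ᵐ ω ∂P,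
      |(P[Y | m₂]) ω - B ω| ≤ |(P[(fun ω => B ω - f (X ω)) | m₂]) ω| + |f (X ω) - B ω| := by
    filter_upwards [htower, hsub] with ω h1 h2
    have : (P[Y | m₂]) ω - B ω
        = (P[(fun ω => B ω - f (X ω)) | m₂]) ω + (f (X ω) - B ω) := by
      rw [h1, h2]
      simp [hfXcond]
    rw [this]
    exact abs_add_le _ _
  have hint1 : Integrable (fun ω => |(P[(fun ω => B ω - f (X ω)) | m₂]) ω|) P :=
    integrable_condExp.abs
  have hint2 : Integrable (fun ω => |f (X ω) - B ω|) P := (hfXint.sub hBint).abs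
  have habs : Integrable (fun ω => |(P[Y | m₂]) ω - B ω|) P :=
    (integrable_condExp.sub hBint).abs
  calc ∫ ω, |(P[Y | m₂]) ω - B ω| ∂P
      ≤ ∫ ω, (|(P[(fun ω => B ω - f (X ω)) | m₂]) ω| + |f (X ω) - B ω|) ∂P :=
        integral_mono_ae habs (hint1.add hint2) hptwise
    _ = (∫ ω, |(P[(fun ω => B ω - f (X ω)) | m₂]) ω| ∂P) + ∫ ω, |f (X ω) - B ω| ∂P :=
        integral_add hint1 hint2
    _ ≤ (∫ ω, |B ω - f (X ω)| ∂P) + ∫ ω, |f (X ω) - B ω| ∂P := by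
        exact add_le_add (integral_abs_condExp_le _) le_rfl
    _ = 2 * ∫ ω, |f (X ω) - B ω| ∂P := by
        have : (fun ω => |B ω - f (X ω)|) = fun ω => |f (X ω) - B ω| := by
          funext ω; rw [abs_sub_comm]
        rw [this]; ring
end

section
/- For every measurable predictor f : 𝒳 → [0,1], E[ | E[Y | σ(f∘X)] − B | ] ≤ 2·E[ |f(X) − B| ], where B = E[Y | σ(X,A)] is the A-group Bayes predictor and σ(f∘X) is the σ-algebra generated by f∘X. (Marginal key inequality in the proof of Theorem 1, using that E[Y | σ(B)] = B almost surely.) -/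
open MeasureTheory ProbabilityTheory
open scoped ENNReal

/-- **Marginal key inequality in the proof of Theorem 1.** For every measurable predictor
`f : 𝒳 → [0,1]`, `E[|E[Y | σ(f∘X)] − B|] ≤ 2·E[|f(X) − B|]`, where `B = E[Y | σ(X,A)]`. -/
theorem expected_dist_condExp_marginal_to_bayes_le
    {Ω 𝒳 𝒜 : Type*} [MeasurableSpace Ω] [MeasurableSpace 𝒳] [MeasurableSpace 𝒜]
    (P : Measure Ω) [IsProbabilityMeasure P]
    (X : Ω → 𝒳) (A : Ω → 𝒜) (Y : Ω → ℝ)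
    (hX : Measurable X) (hA : Measurable A) (hY : Measurable Y)
    (hY01 : ∀ ω, Y ω = 0 ∨ Y ω = 1)
    (f : 𝒳 → ℝ) (hf : Measurable f) (hf01 : ∀ x, f x ∈ Set.Icc (0 : ℝ) 1)
    (B : Ω → ℝ)
    (hB : B = P[Y | MeasurableSpace.comap X inferInstance ⊔ MeasurableSpace.comap A inferInstance]) :
    ∫ ω, |(P[Y | MeasurableSpace.comap (f ∘ X) inferInstance]) ω - B ω| ∂P
      ≤ 2 * ∫ ω, |f (X ω) - B ω| ∂P := by
  have hm'le := sup_le hX.comap_le hA.comap_le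
  have hmle := (hf.comp hX).comap_le
  have hmm' : MeasurableSpace.comap (f ∘ X) inferInstance
      ≤ MeasurableSpace.comap X inferInstance ⊔ MeasurableSpace.comap A inferInstance := by
    refine le_trans ?_ le_sup_left
    rw [← MeasurableSpace.comap_comp]
    exact MeasurableSpace.comap_mono hf.comap_le
  set m : MeasurableSpace Ω := MeasurableSpace.comap (f ∘ X) inferInstance with hm_def
  set m' : MeasurableSpace Ω :=
    MeasurableSpace.comap X inferInstance ⊔ MeasurableSpace.comap A inferInstance with hm'_def
  -- integrability
  have hYint : Integrable Y P := by
    refine (integrable_const (1 : ℝ)).mono' hY.aestronglyMeasurable ?_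
    filter_upwards with ω
    rcases hY01 ω with h | h <;> simp [h]
  have hBint : Integrable B P := hB ▸ integrable_condExp
  have hfXint : Integrable (fun ω => f (X ω)) P := by
    refine (integrable_const (1 : ℝ)).mono' (hf.comp hX).aestronglyMeasurable ?_
    filter_upwards with ω
    rcases hf01 (X ω) with ⟨h0, h1⟩
    rw [Real.norm_eq_abs, abs_of_nonneg h0]; exact h1
  have hfXmeas : StronglyMeasurable[m] (fun ω => f (X ω)) := by
    have : Measurable[m] (f ∘ X) := Measurable.of_comap_le le_rfl
    exact this.stronglyMeasurable
  -- tower property: P[Y|m] = P[B|m] a.e.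
  have h1 : P[B|m] =ᵐ[P] P[Y|m] := by
    rw [hB]; exact condExp_condExp_of_le hmm' hm'le
  -- condExp of the difference
  have h2 : P[(fun ω => B ω - f (X ω))|m] =ᵐ[P] fun ω => (P[B|m]) ω - f (X ω) := by
    refine (condExp_sub hBint hfXint m).trans ?_
    have := condExp_of_stronglyMeasurable hmle hfXmeas hfXint
    rw [this]
    exact Filter.EventuallyEq.rfl
  have key : ∫ ω, |(P[(fun ω => B ω - f (X ω))|m]) ω| ∂P
      ≤ ∫ ω, |B ω - f (X ω)| ∂P := integral_abs_condExp_le _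
  -- rewrite LHS integrand a.e.
  have hcongr : ∫ ω, |(P[Y|m]) ω - B ω| ∂P
      = ∫ ω, |(P[B|m]) ω - B ω| ∂P := by
    refine integral_congr_ae ?_
    filter_upwards [h1] with ω hω
    rw [hω]
  rw [hcongr]
  have hint1 : Integrable (fun ω => |(P[B|m]) ω - f (X ω)|) P :=
    (integrable_condExp.sub hfXint).abs
  have hint2 : Integrable (fun ω => |f (X ω) - B ω|) P := (hfXint.sub hBint).abs
  have step : ∫ ω, |(P[B|m]) ω - B ω| ∂P
      ≤ ∫ ω, |(P[B|m]) ω - f (X ω)| ∂P + ∫ ω, |f (X ω) - B ω| ∂P := by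
    rw [← integral_add hint1 hint2]
    refine integral_mono ((integrable_condExp.sub hBint).abs) (hint1.add hint2) ?_
    intro ω
    exact abs_sub_le _ _ _
  have step2 : ∫ ω, |(P[B|m]) ω - f (X ω)| ∂P ≤ ∫ ω, |f (X ω) - B ω| ∂P := by
    have he : ∫ ω, |(P[B|m]) ω - f (X ω)| ∂P
        = ∫ ω, |(P[(fun ω => B ω - f (X ω))|m]) ω| ∂P := by
      refine integral_congr_ae ?_
      filter_upwards [h2] with ω hω
      rw [hω]
    rw [he]
    refine key.trans (le_of_eq (integral_congr_ae ?_))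
    filter_upwards with ω
    rw [abs_sub_comm]
  linarith
end

section
/- Suppose U : Ω → [0,1] is a measurable random variable that is independent (as a random element) of the triple (X, Y, A). Then: (i) demographic parity holds, i.e. E[U | σ(A)] = E[U] P-almost surely; (ii) equalized odds holds, i.e. E[U | σ(Y, A)] = E[U | σ(Y)] P-almost surely; (iii) E[Y | σ(U)] = E[Y] and E[Y | σ(U, A)] = E[Y | σ(A)] P-almost surely, so the group sufficiency gap of the constant-in-X randomized predictor U equals E[ | E[Y] − E[Y | σ(A)] | ]; and (iv) if moreover Y and A are not independent, then this group sufficiency gap is strictly positive. (Counterexample of Appendix A: a purely random predictor satisfies DP and EO but violates group sufficiency when A is not independent of Y.) -/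
open MeasureTheory ProbabilityTheory
open scoped ENNReal
set_option maxHeartbeats 800000

section Helpers

variable {Ω : Type*}

lemma indep_mono' {m₁ m₂ m₁' m₂' m0 : MeasurableSpace Ω} {μ : @Measure Ω m0}
    (h : Indep m₁ m₂ μ) (h1 : m₁' ≤ m₁) (h2 : m₂' ≤ m₂) :
    Indep m₁' m₂' μ := by
  rw [Indep_iff] at h ⊢
  exact fun t1 t2 ht1 ht2 => h t1 t2 (h1 _ ht1) (h2 _ ht2)

lemma indepFun_of_indep' {m₁ m₂ m0 : MeasurableSpace Ω} {μ : @Measure Ω m0}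
    (h : Indep m₁ m₂ μ) {φ ψ : Ω → ℝ}
    (hφ : Measurable[m₁] φ) (hψ : Measurable[m₂] ψ) :
    IndepFun φ ψ μ := by
  rw [IndepFun_iff_Indep]
  exact indep_mono' h ((@measurable_iff_comap_le Ω ℝ m₁ _ φ).1 hφ)
    ((@measurable_iff_comap_le Ω ℝ m₂ _ ψ).1 hψ)

lemma generateFrom_inter_sup' (m₁ m₂ : MeasurableSpace Ω) :
    m₁ ⊔ m₂ = MeasurableSpace.generateFrom
      {s | ∃ t₁ t₂, MeasurableSet[m₁] t₁ ∧ MeasurableSet[m₂] t₂ ∧ s = t₁ ∩ t₂} := by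
  apply le_antisymm
  · refine sup_le ?_ ?_
    · intro s hs
      exact MeasurableSpace.measurableSet_generateFrom ⟨s, Set.univ, hs, MeasurableSet.univ,
        (Set.inter_univ s).symm⟩
    · intro s hs
      exact MeasurableSpace.measurableSet_generateFrom ⟨Set.univ, s, MeasurableSet.univ, hs,
        (Set.univ_inter s).symm⟩
  · refine MeasurableSpace.generateFrom_le ?_
    rintro s ⟨t₁, t₂, h₁, h₂, rfl⟩
    exact ((le_sup_left : m₁ ≤ m₁ ⊔ m₂) _ h₁).inter ((le_sup_right : m₂ ≤ m₁ ⊔ m₂) _ h₂)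

/-- If `m₁` is independent of `m₂ ⊔ mf` and `f` is `mf`-measurable and integrable, then
`μ[f | m₁ ⊔ m₂] = μ[f | m₂]` a.e. -/
lemma condexp_sup_of_indep' {m₁ m₂ mf m0 : MeasurableSpace Ω} {μ : @Measure Ω m0}
    [IsProbabilityMeasure μ]
    (h₁ : m₁ ≤ m0) (h₂ : m₂ ≤ m0) (hf0 : mf ≤ m0)
    {f : Ω → ℝ} (hfm : StronglyMeasurable[mf] f) (hfi : Integrable f μ)
    (hindep : Indep m₁ (m₂ ⊔ mf) μ) :
    μ[f | m₁ ⊔ m₂] =ᵐ[μ] μ[f | m₂] := by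
  have h12 : m₁ ⊔ m₂ ≤ m0 := sup_le h₁ h₂
  -- key computation over rectangles
  have key : ∀ (t₁ t₂ : Set Ω), MeasurableSet[m₁] t₁ → MeasurableSet[m₂] t₂ →
      ∀ (h : Ω → ℝ), Integrable h μ → Measurable[m₂ ⊔ mf] h →
      ∫ x in t₁ ∩ t₂, h x ∂μ = (μ t₁).toReal * ∫ x in t₂, h x ∂μ := by
    intro t₁ t₂ ht₁ ht₂ h hint hmeas
    have hmul : (t₁ ∩ t₂).indicator h =
        fun ω => t₁.indicator (fun _ => (1 : ℝ)) ω * t₂.indicator h ω := by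
      funext ω
      by_cases h1 : ω ∈ t₁ <;> by_cases h2 : ω ∈ t₂ <;>
        simp [Set.indicator_apply, Set.mem_inter_iff, h1, h2]
    have hφ : Measurable[m₁] (t₁.indicator (fun _ => (1 : ℝ))) :=
      measurable_const.indicator ht₁
    have hψ : Measurable[m₂ ⊔ mf] (t₂.indicator h) :=
      hmeas.indicator ((le_sup_left : m₂ ≤ m₂ ⊔ mf) _ ht₂)
    have hIF : IndepFun (t₁.indicator (fun _ => (1 : ℝ))) (t₂.indicator h) μ :=
      indepFun_of_indep' hindep hφ hψ
    have hφint : Integrable (t₁.indicator (fun _ => (1 : ℝ))) μ :=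
      (integrable_const (1 : ℝ)).indicator (h₁ _ ht₁)
    have hψint : Integrable (t₂.indicator h) μ := hint.indicator (h₂ _ ht₂)
    calc ∫ x in t₁ ∩ t₂, h x ∂μ
        = ∫ x, (t₁ ∩ t₂).indicator h x ∂μ :=
          (integral_indicator ((h₁ _ ht₁).inter (h₂ _ ht₂))).symm
      _ = ∫ x, t₁.indicator (fun _ => (1 : ℝ)) x * t₂.indicator h x ∂μ := by rw [hmul]
      _ = (∫ x, t₁.indicator (fun _ => (1 : ℝ)) x ∂μ) * ∫ x, t₂.indicator h x ∂μ :=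
          hIF.integral_mul_eq_mul_integral hφint.aestronglyMeasurable hψint.aestronglyMeasurable
      _ = (μ t₁).toReal * ∫ x in t₂, h x ∂μ := by
          rw [integral_indicator (h₁ _ ht₁), setIntegral_const, smul_eq_mul, mul_one,
            integral_indicator (h₂ _ ht₂), measureReal_def]
  have hSF : SigmaFinite (μ.trim h₂) := by infer_instance
  have hg_meas : Measurable[m₂ ⊔ mf] (μ[f | m₂]) :=
    (stronglyMeasurable_condExp.measurable).mono (le_sup_left : m₂ ≤ m₂ ⊔ mf) le_rfl
  have hf_meas : Measurable[m₂ ⊔ mf] f :=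
    hfm.measurable.mono (le_sup_right : mf ≤ m₂ ⊔ mf) le_rfl
  set S : Set (Set Ω) :=
    {s | ∃ t₁ t₂, MeasurableSet[m₁] t₁ ∧ MeasurableSet[m₂] t₂ ∧ s = t₁ ∩ t₂} with hS
  have hpi : IsPiSystem S := by
    rintro s ⟨t₁, t₂, h₁', h₂', rfl⟩ u ⟨u₁, u₂, hu₁, hu₂, rfl⟩ _
    exact ⟨t₁ ∩ u₁, t₂ ∩ u₂, h₁'.inter hu₁, h₂'.inter hu₂, by ext x; simp; tauto⟩
  have heq : ∀ s, MeasurableSet[m₁ ⊔ m₂] s →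
      ∫ x in s, (μ[f | m₂]) x ∂μ = ∫ x in s, f x ∂μ := by
    intro s hs
    refine MeasurableSpace.induction_on_inter (m := m₁ ⊔ m₂)
      (C := fun s _ => ∫ x in s, (μ[f | m₂]) x ∂μ = ∫ x in s, f x ∂μ) (s := S)
      (generateFrom_inter_sup' m₁ m₂) hpi ?_ ?_ ?_ ?_ s hs
    · simp
    · rintro t ⟨t₁, t₂, ht₁, ht₂, rfl⟩
      rw [key t₁ t₂ ht₁ ht₂ _ integrable_condExp hg_meas,
        key t₁ t₂ ht₁ ht₂ _ hfi hf_meas,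
        setIntegral_condExp h₂ hfi ht₂]
    · intro t ht hCt
      have ht0 : MeasurableSet t := h12 _ ht
      have e1 := integral_add_compl ht0 (integrable_condExp (f := f) (m := m₂) (μ := μ))
      have e2 := integral_add_compl ht0 hfi
      have etot : ∫ x, (μ[f | m₂]) x ∂μ = ∫ x, f x ∂μ := integral_condExp h₂ (μ := μ) (f := f)
      linarith
    · intro g hdisj hmeasg hCg
      have hmeasg0 : ∀ i, MeasurableSet (g i) := fun i => h12 _ (hmeasg i)
      rw [integral_iUnion hmeasg0 hdisj integrable_condExp.integrableOn,
        integral_iUnion hmeasg0 hdisj hfi.integrableOn]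
      exact tsum_congr hCg
  refine (ae_eq_condExp_of_forall_setIntegral_eq h12 hfi
    (fun s _ _ => integrable_condExp.integrableOn)
    (fun s hms _ => heq s hms)
    (stronglyMeasurable_condExp.mono (le_sup_right : m₂ ≤ m₁ ⊔ m₂)).aestronglyMeasurable).symm

end Helpers


/-- **Counterexample of Appendix A.** If the score `U : Ω → [0,1]` is independent of the triple
`(X, Y, A)`, then (i) demographic parity holds; (ii) equalized odds holds; (iii)
`E[Y|σ(U)] = E[Y]` and `E[Y|σ(U,A)] = E[Y|σ(A)]` a.s., so the group sufficiency gap of `U`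
equals `E[|E[Y] − E[Y|σ(A)]|]`; and (iv) if `Y` and `A` are not independent, this group
sufficiency gap is strictly positive. -/
theorem random_predictor_satisfies_dp_eo_but_not_sufficiency
    {Ω 𝒳 𝒜 : Type*} [MeasurableSpace Ω] [MeasurableSpace 𝒳] [MeasurableSpace 𝒜]
    (P : Measure Ω) [IsProbabilityMeasure P]
    (X : Ω → 𝒳) (A : Ω → 𝒜) (Y : Ω → ℝ)
    (hX : Measurable X) (hA : Measurable A) (hY : Measurable Y)
    (hY01 : ∀ ω, Y ω = 0 ∨ Y ω = 1)
    (U : Ω → ℝ) (hU : Measurable U) (hU01 : ∀ ω, U ω ∈ Set.Icc (0 : ℝ) 1)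
    (hindep : IndepFun U (fun ω => (X ω, Y ω, A ω)) P) :
    (P[U | MeasurableSpace.comap A inferInstance] =ᵐ[P] fun _ => ∫ ω, U ω ∂P)
    ∧ (P[U | MeasurableSpace.comap Y inferInstance ⊔ MeasurableSpace.comap A inferInstance]
        =ᵐ[P] P[U | MeasurableSpace.comap Y inferInstance])
    ∧ (P[Y | MeasurableSpace.comap U inferInstance] =ᵐ[P] fun _ => ∫ ω, Y ω ∂P)
    ∧ (P[Y | MeasurableSpace.comap U inferInstance ⊔ MeasurableSpace.comap A inferInstance]
        =ᵐ[P] P[Y | MeasurableSpace.comap A inferInstance])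
    ∧ (∫ ω, |(P[Y | MeasurableSpace.comap U inferInstance]) ω -
          (P[Y | MeasurableSpace.comap U inferInstance ⊔
                MeasurableSpace.comap A inferInstance]) ω| ∂P
        = ∫ ω, |(∫ ω', Y ω' ∂P) - (P[Y | MeasurableSpace.comap A inferInstance]) ω| ∂P)
    ∧ (¬ IndepFun Y A P →
        0 < ∫ ω, |(P[Y | MeasurableSpace.comap U inferInstance]) ω -
              (P[Y | MeasurableSpace.comap U inferInstance ⊔
                    MeasurableSpace.comap A inferInstance]) ω| ∂P) := by
  classical
  have hUle : (MeasurableSpace.comap U inferInstance) ≤ ‹MeasurableSpace Ω› := measurable_iff_comap_le.mp hU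
  have hAle : (MeasurableSpace.comap A inferInstance) ≤ ‹MeasurableSpace Ω› := measurable_iff_comap_le.mp hA
  have hYle : (MeasurableSpace.comap Y inferInstance) ≤ ‹MeasurableSpace Ω› := measurable_iff_comap_le.mp hY
  have hA_le_T : (MeasurableSpace.comap A inferInstance) ≤ (MeasurableSpace.comap (fun ω => (X ω, Y ω, A ω)) inferInstance) := by
    rintro s ⟨t, ht, rfl⟩
    exact ⟨(fun p : 𝒳 × ℝ × 𝒜 => p.2.2) ⁻¹' t, (measurable_snd.comp measurable_snd) ht, rfl⟩
  have hY_le_T : (MeasurableSpace.comap Y inferInstance) ≤ (MeasurableSpace.comap (fun ω => (X ω, Y ω, A ω)) inferInstance) := by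
    rintro s ⟨t, ht, rfl⟩
    exact ⟨(fun p : 𝒳 × ℝ × 𝒜 => p.2.1) ⁻¹' t, (measurable_fst.comp measurable_snd) ht, rfl⟩
  have hIndep : Indep (MeasurableSpace.comap U inferInstance) (MeasurableSpace.comap (fun ω => (X ω, Y ω, A ω)) inferInstance) P := (IndepFun_iff_Indep _ _ _).1 hindep
  have hUsm : StronglyMeasurable[(MeasurableSpace.comap U inferInstance)] U :=
    ((@measurable_iff_comap_le Ω ℝ (MeasurableSpace.comap U inferInstance) _ U).mpr le_rfl).stronglyMeasurable
  have hYsm : StronglyMeasurable[(MeasurableSpace.comap Y inferInstance)] Y :=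
    ((@measurable_iff_comap_le Ω ℝ (MeasurableSpace.comap Y inferInstance) _ Y).mpr le_rfl).stronglyMeasurable
  have hYint : Integrable Y P := by
    refine (integrable_const (1 : ℝ)).mono' hY.aestronglyMeasurable (ae_of_all _ fun ω => ?_)
    rcases hY01 ω with h | h <;> simp [h]
  have part1 : P[U | (MeasurableSpace.comap A inferInstance)] =ᵐ[P] fun _ => ∫ ω, U ω ∂P :=
    condExp_indep_eq hUle hAle hUsm (indep_mono' hIndep le_rfl hA_le_T)
  have part2 : P[U | (MeasurableSpace.comap Y inferInstance) ⊔ (MeasurableSpace.comap A inferInstance)] =ᵐ[P] P[U | (MeasurableSpace.comap Y inferInstance)] := by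
    have h2a : P[U | (MeasurableSpace.comap Y inferInstance) ⊔ (MeasurableSpace.comap A inferInstance)] =ᵐ[P] fun _ => ∫ ω, U ω ∂P :=
      condExp_indep_eq hUle (sup_le hYle hAle) hUsm
        (indep_mono' hIndep le_rfl (sup_le hY_le_T hA_le_T))
    have h2b : P[U | (MeasurableSpace.comap Y inferInstance)] =ᵐ[P] fun _ => ∫ ω, U ω ∂P :=
      condExp_indep_eq hUle hYle hUsm (indep_mono' hIndep le_rfl hY_le_T)
    exact h2a.trans h2b.symm
  have part3 : P[Y | (MeasurableSpace.comap U inferInstance)] =ᵐ[P] fun _ => ∫ ω, Y ω ∂P :=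
    condExp_indep_eq hYle hUle hYsm
      (indep_mono' ((IndepFun_iff_Indep _ _ _).1 hindep.symm) hY_le_T le_rfl)
  have part4 : P[Y | (MeasurableSpace.comap U inferInstance) ⊔ (MeasurableSpace.comap A inferInstance)] =ᵐ[P] P[Y | (MeasurableSpace.comap A inferInstance)] :=
    condexp_sup_of_indep' hUle hAle hYle hYsm hYint
      (indep_mono' hIndep le_rfl (sup_le hA_le_T hY_le_T))
  have part5 : ∫ ω, |(P[Y | (MeasurableSpace.comap U inferInstance)]) ω - (P[Y | (MeasurableSpace.comap U inferInstance) ⊔ (MeasurableSpace.comap A inferInstance)]) ω| ∂P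
      = ∫ ω, |(∫ ω', Y ω' ∂P) - (P[Y | (MeasurableSpace.comap A inferInstance)]) ω| ∂P := by
    refine integral_congr_ae ?_
    filter_upwards [part3, part4] with ω h1 h2
    rw [h1, h2]
  refine ⟨part1, part2, part3, part4, part5, ?_⟩
  intro hnot
  rw [part5]
  set c := ∫ ω', Y ω' ∂P with hc
  set g := P[Y | (MeasurableSpace.comap A inferInstance)] with hg
  by_contra hcon
  have hzero : ∫ ω, |c - g ω| ∂P = 0 :=
    le_antisymm (not_lt.mp hcon) (integral_nonneg fun ω => abs_nonneg _)
  have hint : Integrable (fun ω => |c - g ω|) P :=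
    ((integrable_const c).sub integrable_condExp).abs
  have hae : (fun ω => |c - g ω|) =ᵐ[P] 0 :=
    (integral_eq_zero_iff_of_nonneg_ae (ae_of_all _ fun ω => abs_nonneg _) hint).1 hzero
  have heq : g =ᵐ[P] fun _ => c := by
    filter_upwards [hae] with ω h
    have h' : |c - g ω| = 0 := h
    have := abs_eq_zero.mp h'
    linarith
  -- derive independence of Y and A
  set E : Set Ω := Y ⁻¹' {1} with hE
  have hEmeas : MeasurableSet E := hY (measurableSet_singleton 1)
  have hYind : Y = E.indicator (fun _ => (1 : ℝ)) := by
    funext ω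
    rcases hY01 ω with h | h
    · have : ω ∉ E := by simp [hE, Set.mem_preimage, h]
      simp [Set.indicator_of_notMem this, h]
    · have : ω ∈ E := by simp [hE, Set.mem_preimage, h]
      simp [Set.indicator_of_mem this, h]
  have hcE : c = (P E).toReal := by
    rw [hc, hYind, integral_indicator hEmeas, setIntegral_const, smul_eq_mul, mul_one, measureReal_def]
  have keyB : ∀ B : Set Ω, MeasurableSet[(MeasurableSpace.comap A inferInstance)] B → P (E ∩ B) = P E * P B := by
    intro B hB
    have hBm0 : MeasurableSet B := hAle _ hB
    have h1 : ∫ ω in B, Y ω ∂P = c * (P B).toReal := by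
      calc ∫ ω in B, Y ω ∂P = ∫ ω in B, g ω ∂P := (setIntegral_condExp hAle hYint hB).symm
        _ = ∫ _ω in B, c ∂P := setIntegral_congr_ae hBm0 (heq.mono fun ω h _ => h)
        _ = c * (P B).toReal := by rw [setIntegral_const, smul_eq_mul, mul_comm, measureReal_def]
    have h2 : ∫ ω in B, Y ω ∂P = (P (E ∩ B)).toReal := by
      rw [hYind, setIntegral_indicator hEmeas, setIntegral_const, smul_eq_mul, mul_one,
        Set.inter_comm, measureReal_def]
    have h3 : (P (E ∩ B)).toReal = ((P E) * (P B)).toReal := by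
      rw [← h2, h1, hcE, ENNReal.toReal_mul]
    exact (ENNReal.toReal_eq_toReal_iff' (measure_ne_top P _)
      (ENNReal.mul_ne_top (measure_ne_top P _) (measure_ne_top P _))).1 h3
  refine hnot ?_
  rw [indepFun_iff_measure_inter_preimage_eq_mul]
  intro s t hs ht
  have hBcA : MeasurableSet[(MeasurableSpace.comap A inferInstance)] (A ⁻¹' t) := ⟨t, ht, rfl⟩
  have hBm0 : MeasurableSet (A ⁻¹' t) := hAle _ hBcA
  by_cases h0 : (0 : ℝ) ∈ s <;> by_cases h1 : (1 : ℝ) ∈ s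
  · have hpre : Y ⁻¹' s = Set.univ := by
      ext ω; rcases hY01 ω with h | h <;> simp [Set.mem_preimage, h, h0, h1]
    simp [hpre, measure_univ]
  · -- 0 ∈ s, 1 ∉ s : preimage is Eᶜ
    have hpre : Y ⁻¹' s = Eᶜ := by
      ext ω; rcases hY01 ω with h | h <;>
        simp [Set.mem_preimage, hE, h, h0, h1]
    have hsplit : Eᶜ ∩ A ⁻¹' t = A ⁻¹' t \ (E ∩ A ⁻¹' t) := by
      ext ω; simp; tauto
    have hcompl : P Eᶜ = 1 - P E := by
      rw [measure_compl hEmeas (measure_ne_top P E), measure_univ]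
    rw [hpre, hsplit, measure_diff Set.inter_subset_right
      (hEmeas.inter hBm0).nullMeasurableSet (measure_ne_top P _), keyB _ hBcA, hcompl,
      ENNReal.sub_mul (fun _ _ => measure_ne_top P _), one_mul]
  · -- 0 ∉ s, 1 ∈ s : preimage is E
    have hpre : Y ⁻¹' s = E := by
      ext ω; rcases hY01 ω with h | h <;>
        simp [Set.mem_preimage, hE, h, h0, h1]
    rw [hpre, keyB _ hBcA]
  · have hpre : Y ⁻¹' s = ∅ := by
      ext ω; rcases hY01 ω with h | h <;> simp [Set.mem_preimage, h, h0, h1]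
    simp [hpre]
end
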